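/- arXiv:1310.5757 — 6 statements merged into one kernel-verified Lean document; each statement's English description precedes it below -/
import Mathlib

section
/- Let L1, L2 > 0 and Ω = (0,L1)×(0,L2). Let α1, α2, β1, β2 be real constants with α1 ≥ 0, α2 ≥ 0 and α2·β1 − α1·β2 > 0, and set T1 = [[α1, β1], [β1, −α1]] and T2 = [[α2, β2], [β2, −α2]]. Let u = (u1, u2) be a pair of functions continuously differentiable on the closed rectangle [0,L1]×[0,L2] such that u1 = 0 on Γ_W ∪ Γ_S (i.e. u1(0,y) = 0 and u1(x,0) = 0 for all x, y) and u2 = 0 on Γ_E ∪ Γ_N (i.e. u2(L1,y) = 0 and u2(x,L2) = 0 for all x, y). Then ∫_Ω u(x,y)ᵗ·(T1·∂x u(x,y) + T2·∂y u(x,y)) dx dy ≥ 0. -/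
open Set MeasureTheory

/-- The closed rectangle `[0,L1] × [0,L2]`. -/
def Rect (L1 L2 : ℝ) : Set (ℝ × ℝ) := Icc 0 L1 ×ˢ Icc 0 L2

/-- The open rectangle `Ω = (0,L1) × (0,L2)`. -/
def Om (L1 L2 : ℝ) : Set (ℝ × ℝ) := Ioo 0 L1 ×ˢ Ioo 0 L2

/-- The partial derivative `∂x f` on the closed rectangle. -/
noncomputable def pdx (L1 L2 : ℝ) (f : ℝ × ℝ → ℝ) (p : ℝ × ℝ) : ℝ :=
  fderivWithin ℝ f (Rect L1 L2) p (1, 0)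

/-- The partial derivative `∂y f` on the closed rectangle. -/
noncomputable def pdy (L1 L2 : ℝ) (f : ℝ × ℝ → ℝ) (p : ℝ × ℝ) : ℝ :=
  fderivWithin ℝ f (Rect L1 L2) p (0, 1)

/-- 1D fundamental theorem of calculus over an open interval, set-integral form. -/
lemma ftc_Ioo (a b : ℝ) (hab : a ≤ b) (f f' : ℝ → ℝ)
    (hc : ContinuousOn f (Icc a b)) (hc' : ContinuousOn f' (Icc a b))
    (hd : ∀ t ∈ Ioo a b, HasDerivAt f (f' t) t) :
    ∫ t in Ioo a b, f' t = f b - f a := by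
  rw [← integral_Ioc_eq_integral_Ioo, ← intervalIntegral.integral_of_le hab]
  exact intervalIntegral.integral_eq_sub_of_hasDeriv_right_of_le hab hc
    (fun t ht => (hd t ht).hasDerivWithinAt)
    (hc'.intervalIntegrable_of_Icc hab)

/-- Positivity of the constant-coefficient elliptic-mode operator
`𝒯₂ u = T1·∂x u + T2·∂y u` with `T1 = [[α1,β1],[β1,-α1]]`, `T2 = [[α2,β2],[β2,-α2]]`,
`α1, α2 ≥ 0`, `α2·β1 - α1·β2 > 0`, on pairs `(u1,u2)` with `u1 = 0` on `Γ_W ∪ Γ_S`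
and `u2 = 0` on `Γ_E ∪ Γ_N`: `∫_Ω uᵗ·(T1·∂x u + T2·∂y u) ≥ 0`. -/
theorem stmt8 (L1 L2 α1 β1 α2 β2 : ℝ) (hL1 : 0 < L1) (hL2 : 0 < L2)
    (hα1 : 0 ≤ α1) (hα2 : 0 ≤ α2) (hdet : 0 < α2 * β1 - α1 * β2)
    (u1 u2 : ℝ × ℝ → ℝ)
    (hu1 : ContDiffOn ℝ 1 u1 (Rect L1 L2)) (hu2 : ContDiffOn ℝ 1 u2 (Rect L1 L2))
    (h1W : ∀ y ∈ Icc (0 : ℝ) L2, u1 (0, y) = 0)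
    (h1S : ∀ x ∈ Icc (0 : ℝ) L1, u1 (x, 0) = 0)
    (h2E : ∀ y ∈ Icc (0 : ℝ) L2, u2 (L1, y) = 0)
    (h2N : ∀ x ∈ Icc (0 : ℝ) L1, u2 (x, L2) = 0) :
    0 ≤ ∫ p in Om L1 L2,
        (u1 p * (α1 * pdx L1 L2 u1 p + β1 * pdx L1 L2 u2 p
            + α2 * pdy L1 L2 u1 p + β2 * pdy L1 L2 u2 p)
          + u2 p * (β1 * pdx L1 L2 u1 p - α1 * pdx L1 L2 u2 p
            + β2 * pdy L1 L2 u1 p - α2 * pdy L1 L2 u2 p)) := by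
  -- basic geometry of the rectangle
  have hOmR : Om L1 L2 ⊆ Rect L1 L2 :=
    Set.prod_mono Ioo_subset_Icc_self Ioo_subset_Icc_self
  have hUD : UniqueDiffOn ℝ (Rect L1 L2) :=
    (uniqueDiffOn_Icc hL1).prod (uniqueDiffOn_Icc hL2)
  have hOmOpen : IsOpen (Om L1 L2) := isOpen_Ioo.prod isOpen_Ioo
  have hnhds : ∀ p ∈ Om L1 L2, Rect L1 L2 ∈ nhds p := fun p hp =>
    Filter.mem_of_superset (hOmOpen.mem_nhds hp) hOmR
  have hRcomp : IsCompact (Rect L1 L2) := isCompact_Icc.prod isCompact_Icc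
  -- full derivatives at interior points
  have hu1d : ∀ p ∈ Om L1 L2, HasFDerivAt u1 (fderivWithin ℝ u1 (Rect L1 L2) p) p :=
    fun p hp => ((hu1.differentiableOn one_ne_zero p (hOmR hp)).hasFDerivWithinAt).hasFDerivAt
      (hnhds p hp)
  have hu2d : ∀ p ∈ Om L1 L2, HasFDerivAt u2 (fderivWithin ℝ u2 (Rect L1 L2) p) p :=
    fun p hp => ((hu2.differentiableOn one_ne_zero p (hOmR hp)).hasFDerivWithinAt).hasFDerivAt
      (hnhds p hp)
  -- continuity of partial derivatives
  have cu1 : ContinuousOn u1 (Rect L1 L2) := hu1.continuousOn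
  have cu2 : ContinuousOn u2 (Rect L1 L2) := hu2.continuousOn
  have cd1 : ContinuousOn (fun p => fderivWithin ℝ u1 (Rect L1 L2) p) (Rect L1 L2) :=
    hu1.continuousOn_fderivWithin hUD le_rfl
  have cd2 : ContinuousOn (fun p => fderivWithin ℝ u2 (Rect L1 L2) p) (Rect L1 L2) :=
    hu2.continuousOn_fderivWithin hUD le_rfl
  have cpx1 : ContinuousOn (pdx L1 L2 u1) (Rect L1 L2) :=
    (ContinuousLinearMap.apply ℝ ℝ ((1 : ℝ), (0 : ℝ))).continuous.comp_continuousOn cd1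
  have cpx2 : ContinuousOn (pdx L1 L2 u2) (Rect L1 L2) :=
    (ContinuousLinearMap.apply ℝ ℝ ((1 : ℝ), (0 : ℝ))).continuous.comp_continuousOn cd2
  have cpy1 : ContinuousOn (pdy L1 L2 u1) (Rect L1 L2) :=
    (ContinuousLinearMap.apply ℝ ℝ ((0 : ℝ), (1 : ℝ))).continuous.comp_continuousOn cd1
  have cpy2 : ContinuousOn (pdy L1 L2 u2) (Rect L1 L2) :=
    (ContinuousLinearMap.apply ℝ ℝ ((0 : ℝ), (1 : ℝ))).continuous.comp_continuousOn cd2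
  -- the two "divergence" pieces and their potentials
  set P : ℝ × ℝ → ℝ := fun p =>
    2 * (α1 * (u1 p * pdx L1 L2 u1 p - u2 p * pdx L1 L2 u2 p)
      + β1 * (u1 p * pdx L1 L2 u2 p + u2 p * pdx L1 L2 u1 p)) with hP
  set Q : ℝ × ℝ → ℝ := fun p =>
    2 * (α2 * (u1 p * pdy L1 L2 u1 p - u2 p * pdy L1 L2 u2 p)
      + β2 * (u1 p * pdy L1 L2 u2 p + u2 p * pdy L1 L2 u1 p)) with hQ
  set F : ℝ × ℝ → ℝ := fun p =>
    α1 * (u1 p * u1 p - u2 p * u2 p) + (2 * β1) * (u1 p * u2 p) with hF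
  set G : ℝ × ℝ → ℝ := fun p =>
    α2 * (u1 p * u1 p - u2 p * u2 p) + (2 * β2) * (u1 p * u2 p) with hG
  have cP : ContinuousOn P (Rect L1 L2) := by
    apply ContinuousOn.mul continuousOn_const
    exact ((continuousOn_const.mul ((cu1.mul cpx1).sub (cu2.mul cpx2)))).add
      (continuousOn_const.mul ((cu1.mul cpx2).add (cu2.mul cpx1)))
  have cQ : ContinuousOn Q (Rect L1 L2) := by
    apply ContinuousOn.mul continuousOn_const
    exact ((continuousOn_const.mul ((cu1.mul cpy1).sub (cu2.mul cpy2)))).add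
      (continuousOn_const.mul ((cu1.mul cpy2).add (cu2.mul cpy1)))
  have cF : ContinuousOn F (Rect L1 L2) :=
    (continuousOn_const.mul ((cu1.mul cu1).sub (cu2.mul cu2))).add
      (continuousOn_const.mul (cu1.mul cu2))
  have cG : ContinuousOn G (Rect L1 L2) :=
    (continuousOn_const.mul ((cu1.mul cu1).sub (cu2.mul cu2))).add
      (continuousOn_const.mul (cu1.mul cu2))
  -- derivative of F in x-direction at interior points
  have hFd : ∀ p ∈ Om L1 L2, HasDerivAt (fun x => F (x, p.2)) (P p) p.1 := by
    intro p hp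
    have h1 := hu1d p hp
    have h2 := hu2d p hp
    have hFder : HasFDerivAt F
        (α1 • ((u1 p • fderivWithin ℝ u1 (Rect L1 L2) p
            + u1 p • fderivWithin ℝ u1 (Rect L1 L2) p)
          - (u2 p • fderivWithin ℝ u2 (Rect L1 L2) p
            + u2 p • fderivWithin ℝ u2 (Rect L1 L2) p))
        + (2 * β1) • (u1 p • fderivWithin ℝ u2 (Rect L1 L2) p
            + u2 p • fderivWithin ℝ u1 (Rect L1 L2) p)) p :=
      (((h1.mul h1).sub (h2.mul h2)).const_mul α1).add ((h1.mul h2).const_mul (2 * β1))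
    have hline : HasDerivAt (fun x : ℝ => (x, p.2)) ((1 : ℝ), (0 : ℝ)) p.1 :=
      HasDerivAt.prodMk (hasDerivAt_id p.1) (hasDerivAt_const p.1 p.2)
    have := hFder.comp_hasDerivAt p.1 (by simpa using hline)
    refine this.congr_deriv ?_
    simp only [hP, pdx, ContinuousLinearMap.add_apply, ContinuousLinearMap.sub_apply,
      ContinuousLinearMap.smul_apply, smul_eq_mul]
    ring
  -- derivative of G in y-direction at interior points
  have hGd : ∀ p ∈ Om L1 L2, HasDerivAt (fun y => G (p.1, y)) (Q p) p.2 := by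
    intro p hp
    have h1 := hu1d p hp
    have h2 := hu2d p hp
    have hGder : HasFDerivAt G
        (α2 • ((u1 p • fderivWithin ℝ u1 (Rect L1 L2) p
            + u1 p • fderivWithin ℝ u1 (Rect L1 L2) p)
          - (u2 p • fderivWithin ℝ u2 (Rect L1 L2) p
            + u2 p • fderivWithin ℝ u2 (Rect L1 L2) p))
        + (2 * β2) • (u1 p • fderivWithin ℝ u2 (Rect L1 L2) p
            + u2 p • fderivWithin ℝ u1 (Rect L1 L2) p)) p :=
      (((h1.mul h1).sub (h2.mul h2)).const_mul α2).add ((h1.mul h2).const_mul (2 * β2))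
    have hline : HasDerivAt (fun y : ℝ => (p.1, y)) ((0 : ℝ), (1 : ℝ)) p.2 :=
      HasDerivAt.prodMk (hasDerivAt_const p.2 p.1) (hasDerivAt_id p.2)
    have := hGder.comp_hasDerivAt p.2 (by simpa using hline)
    refine this.congr_deriv ?_
    simp only [hQ, pdy, ContinuousLinearMap.add_apply, ContinuousLinearMap.sub_apply,
      ContinuousLinearMap.smul_apply, smul_eq_mul]
    ring
  -- slice integrals of P (in x, for fixed y)
  have hPslice : ∀ y ∈ Ioo (0 : ℝ) L2,
      ∫ x in Ioo (0 : ℝ) L1, P (x, y) = α1 * (u1 (L1, y) * u1 (L1, y) + u2 (0, y) * u2 (0, y)) := by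
    intro y hy
    have hyI : y ∈ Icc (0 : ℝ) L2 := ⟨hy.1.le, hy.2.le⟩
    have hmap : MapsTo (fun x : ℝ => (x, y)) (Icc 0 L1) (Rect L1 L2) :=
      fun x hx => ⟨hx, hyI⟩
    have hcm : ContinuousOn (fun x : ℝ => ((x, y) : ℝ × ℝ)) (Icc 0 L1) :=
      (continuous_id.prodMk continuous_const).continuousOn
    have key : ∫ x in Ioo (0 : ℝ) L1, P (x, y) = F (L1, y) - F (0, y) := by
      apply ftc_Ioo 0 L1 hL1.le _ _ (cF.comp hcm hmap) (cP.comp hcm hmap)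
      intro x hx
      exact hFd (x, y) ⟨hx, hy⟩
    rw [key, hF]
    simp only
    rw [h1W y hyI, h2E y hyI]
    ring
  -- slice integrals of Q (in y, for fixed x)
  have hQslice : ∀ x ∈ Ioo (0 : ℝ) L1,
      ∫ y in Ioo (0 : ℝ) L2, Q (x, y) = α2 * (u1 (x, L2) * u1 (x, L2) + u2 (x, 0) * u2 (x, 0)) := by
    intro x hx
    have hxI : x ∈ Icc (0 : ℝ) L1 := ⟨hx.1.le, hx.2.le⟩
    have hmap : MapsTo (fun y : ℝ => ((x, y) : ℝ × ℝ)) (Icc 0 L2) (Rect L1 L2) :=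
      fun y hy => ⟨hxI, hy⟩
    have hcm : ContinuousOn (fun y : ℝ => ((x, y) : ℝ × ℝ)) (Icc 0 L2) :=
      (continuous_const.prodMk continuous_id).continuousOn
    have key : ∫ y in Ioo (0 : ℝ) L2, Q (x, y) = G (x, L2) - G (x, 0) := by
      apply ftc_Ioo 0 L2 hL2.le _ _ (cG.comp hcm hmap) (cQ.comp hcm hmap)
      intro y hy
      exact hGd (x, y) ⟨hx, hy⟩
    rw [key, hG]
    simp only
    rw [h1S x hxI, h2N x hxI]
    ring
  -- integrability
  have intP : IntegrableOn P (Om L1 L2) := (cP.integrableOn_compact hRcomp).mono_set hOmR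
  have intQ : IntegrableOn Q (Om L1 L2) := (cQ.integrableOn_compact hRcomp).mono_set hOmR
  -- Fubini for Q
  have KQ : ∫ p in Om L1 L2, Q p = ∫ x in Ioo (0 : ℝ) L1, ∫ y in Ioo (0 : ℝ) L2, Q (x, y) := by
    rw [show Om L1 L2 = Ioo (0:ℝ) L1 ×ˢ Ioo (0:ℝ) L2 from rfl]
    rw [Measure.volume_eq_prod] at intQ ⊢
    exact setIntegral_prod Q intQ
  -- Fubini for P (with a swap of coordinates)
  have KP : ∫ p in Om L1 L2, P p = ∫ y in Ioo (0 : ℝ) L2, ∫ x in Ioo (0 : ℝ) L1, P (x, y) := by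
    have hswap : ∫ p in Om L1 L2, P p
        = ∫ q in Ioo (0:ℝ) L2 ×ˢ Ioo (0:ℝ) L1, P (Prod.swap q) := by
      rw [show Om L1 L2 = Prod.swap '' (Ioo (0:ℝ) L2 ×ˢ Ioo (0:ℝ) L1) by
        rw [Set.image_swap_prod]; rfl]
      rw [Measure.volume_eq_prod]
      exact (Measure.measurePreserving_swap (μ := (volume : Measure ℝ)) (ν := volume)).setIntegral_image_emb
        MeasurableEquiv.prodComm.measurableEmbedding P _
    rw [hswap]
    have intP' : IntegrableOn (fun q => P (Prod.swap q))
        (Ioo (0:ℝ) L2 ×ˢ Ioo (0:ℝ) L1) := by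
      have : IntegrableOn (fun q => P (Prod.swap q)) (Icc (0:ℝ) L2 ×ˢ Icc (0:ℝ) L1) := by
        apply ContinuousOn.integrableOn_compact (isCompact_Icc.prod isCompact_Icc)
        exact cP.comp continuous_swap.continuousOn
          (fun q hq => ⟨hq.2, hq.1⟩)
      exact this.mono_set (Set.prod_mono Ioo_subset_Icc_self Ioo_subset_Icc_self)
    rw [Measure.volume_eq_prod] at intP' ⊢
    exact setIntegral_prod _ intP'
  -- nonnegativity of the two pieces
  have hPpos : 0 ≤ ∫ p in Om L1 L2, P p := by
    rw [KP]
    apply setIntegral_nonneg measurableSet_Ioo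
    intro y hy
    rw [hPslice y hy]
    exact mul_nonneg hα1 (by nlinarith [mul_self_nonneg (u1 (L1,y)), mul_self_nonneg (u2 (0,y))])
  have hQpos : 0 ≤ ∫ p in Om L1 L2, Q p := by
    rw [KQ]
    apply setIntegral_nonneg measurableSet_Ioo
    intro x hx
    rw [hQslice x hx]
    exact mul_nonneg hα2 (by nlinarith [mul_self_nonneg (u1 (x,L2)), mul_self_nonneg (u2 (x,0))])
  -- put things together
  have hsum : ∫ p in Om L1 L2,
        (u1 p * (α1 * pdx L1 L2 u1 p + β1 * pdx L1 L2 u2 p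
            + α2 * pdy L1 L2 u1 p + β2 * pdy L1 L2 u2 p)
          + u2 p * (β1 * pdx L1 L2 u1 p - α1 * pdx L1 L2 u2 p
            + β2 * pdy L1 L2 u1 p - α2 * pdy L1 L2 u2 p))
      = ∫ p in Om L1 L2, (P p / 2 + Q p / 2) := by
    apply setIntegral_congr_fun (hOmOpen.measurableSet)
    intro p _
    simp only [hP, hQ]
    ring
  rw [hsum, integral_add (intP.div_const 2) (intQ.div_const 2), integral_div, integral_div]
  positivity
end

section
/- Let L1, L2 > 0 and Ω = (0,L1)×(0,L2). Let α1, α2, β1, β2 be continuously differentiable real-valued functions on the closed rectangle [0,L1]×[0,L2] with α1(x,y) ≥ c0 and α2(x,y) ≥ c0 for some constant c0 > 0, and set T1(x,y) = [[α1, β1], [β1, −α1]] and T2(x,y) = [[α2, β2], [β2, −α2]]. Set ω0 = (1/2)·sup_{(x,y)∈[0,L1]×[0,L2]} ((∂x α1 + ∂y α2)² + (∂x β1 + ∂y β2)²)^{1/2}. Then for every pair u = (u1, u2) of functions continuously differentiable on the closed rectangle with u1 = 0 on Γ_W ∪ Γ_S and u2 = 0 on Γ_E ∪ Γ_N, one has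 ∫_Ω u(x,y)ᵗ·(T1(x,y)·∂x u(x,y) + T2(x,y)·∂y u(x,y)) dx dy ≥ −ω0·∫_Ω |u(x,y)|² dx dy. -/
open Set MeasureTheory

section Aux
variable {L1 L2 : ℝ}

lemma rect_compact : IsCompact (Rect L1 L2) := isCompact_Icc.prod isCompact_Icc

lemma om_subset_rect : Om L1 L2 ⊆ Rect L1 L2 :=
  prod_mono Ioo_subset_Icc_self Ioo_subset_Icc_self

lemma rect_mem_nhds {p : ℝ × ℝ} (hp : p ∈ Om L1 L2) : Rect L1 L2 ∈ nhds p :=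
  Filter.mem_of_superset ((isOpen_Ioo.prod isOpen_Ioo).mem_nhds hp) om_subset_rect

lemma uniqueDiffOn_rect (hL1 : 0 < L1) (hL2 : 0 < L2) : UniqueDiffOn ℝ (Rect L1 L2) :=
  (uniqueDiffOn_Icc hL1).prod (uniqueDiffOn_Icc hL2)

lemma pdx_contOn (hL1 : 0 < L1) (hL2 : 0 < L2) {f : ℝ × ℝ → ℝ}
    (hf : ContDiffOn ℝ 1 f (Rect L1 L2)) : ContinuousOn (pdx L1 L2 f) (Rect L1 L2) := by
  have h := hf.continuousOn_fderivWithin (uniqueDiffOn_rect hL1 hL2) le_rfl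
  exact (ContinuousLinearMap.apply ℝ ℝ ((1:ℝ),(0:ℝ))).continuous.comp_continuousOn h

lemma pdy_contOn (hL1 : 0 < L1) (hL2 : 0 < L2) {f : ℝ × ℝ → ℝ}
    (hf : ContDiffOn ℝ 1 f (Rect L1 L2)) : ContinuousOn (pdy L1 L2 f) (Rect L1 L2) := by
  have h := hf.continuousOn_fderivWithin (uniqueDiffOn_rect hL1 hL2) le_rfl
  exact (ContinuousLinearMap.apply ℝ ℝ ((0:ℝ),(1:ℝ))).continuous.comp_continuousOn h

lemma integrableOn_om {g : ℝ × ℝ → ℝ} (hg : ContinuousOn g (Rect L1 L2)) :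
    IntegrableOn g (Om L1 L2) :=
  (hg.integrableOn_compact rect_compact).mono_set om_subset_rect

lemma hasDerivAt_slice_x {f : ℝ × ℝ → ℝ} (hf : ContDiffOn ℝ 1 f (Rect L1 L2))
    {p : ℝ × ℝ} (hp : p ∈ Om L1 L2) :
    HasDerivAt (fun x => f (x, p.2)) (pdx L1 L2 f p) p.1 := by
  have hmem := rect_mem_nhds hp
  have hd : DifferentiableAt ℝ f p :=
    ((hf.differentiableOn one_ne_zero) p (om_subset_rect hp)).differentiableAt hmem
  have hline : HasDerivAt (fun x : ℝ => (x, p.2)) ((1:ℝ), (0:ℝ)) p.1 :=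
    (hasDerivAt_id p.1).prodMk (hasDerivAt_const p.1 p.2)
  have := hd.hasFDerivAt.comp_hasDerivAt p.1 hline
  simp only [pdx, fderivWithin_of_mem_nhds hmem]
  exact this

lemma hasDerivAt_slice_y {f : ℝ × ℝ → ℝ} (hf : ContDiffOn ℝ 1 f (Rect L1 L2))
    {p : ℝ × ℝ} (hp : p ∈ Om L1 L2) :
    HasDerivAt (fun y => f (p.1, y)) (pdy L1 L2 f p) p.2 := by
  have hmem := rect_mem_nhds hp
  have hd : DifferentiableAt ℝ f p :=
    ((hf.differentiableOn one_ne_zero) p (om_subset_rect hp)).differentiableAt hmem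
  have hline : HasDerivAt (fun y : ℝ => (p.1, y)) ((0:ℝ), (1:ℝ)) p.2 :=
    (hasDerivAt_const p.2 p.1).prodMk (hasDerivAt_id p.2)
  have := hd.hasFDerivAt.comp_hasDerivAt p.2 hline
  simp only [pdy, fderivWithin_of_mem_nhds hmem]
  exact this

lemma div_x (hL1 : 0 < L1) (hL2 : 0 < L2) {F E : ℝ × ℝ → ℝ}
    (hF : ContinuousOn F (Rect L1 L2)) (hE : ContinuousOn E (Rect L1 L2))
    (hd : ∀ p ∈ Om L1 L2, HasDerivAt (fun x => F (x, p.2)) (E p) p.1)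
    (hb : ∀ y ∈ Ioo (0:ℝ) L2, F (0, y) ≤ 0 ∧ 0 ≤ F (L1, y)) :
    0 ≤ ∫ p in Om L1 L2, E p := by
  have hEint : IntegrableOn E (Om L1 L2) := integrableOn_om hE
  have fub : ∫ p in Om L1 L2, E p
      = ∫ y in Ioo (0:ℝ) L2, ∫ x in Ioo (0:ℝ) L1, E (x, y) := by
    rw [show (volume : Measure (ℝ × ℝ)).restrict (Om L1 L2)
        = ((volume : Measure ℝ).restrict (Ioo 0 L1)).prod
            ((volume : Measure ℝ).restrict (Ioo 0 L2)) by
      rw [Measure.volume_eq_prod, Measure.prod_restrict]; rfl]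
    have : Integrable E (((volume : Measure ℝ).restrict (Ioo 0 L1)).prod
        ((volume : Measure ℝ).restrict (Ioo 0 L2))) := by
      rwa [Measure.prod_restrict, ← Measure.volume_eq_prod]
    exact integral_prod_symm E this
  rw [fub]
  apply setIntegral_nonneg measurableSet_Ioo
  intro y hy
  have hyI : y ∈ Icc (0:ℝ) L2 := Ioo_subset_Icc_self hy
  have key : ∫ x in Ioo (0:ℝ) L1, E (x, y) = F (L1, y) - F (0, y) := by
    have hmap : MapsTo (fun x : ℝ => (x, y)) (Icc 0 L1) (Rect L1 L2) :=
      fun x hx => ⟨hx, hyI⟩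
    have hcont : ContinuousOn (fun x => F (x, y)) (Icc 0 L1) :=
      hF.comp ((continuous_id.prodMk continuous_const).continuousOn) hmap
    have hEcont : ContinuousOn (fun x => E (x, y)) (Icc 0 L1) :=
      hE.comp ((continuous_id.prodMk continuous_const).continuousOn) hmap
    have hint : IntervalIntegrable (fun x => E (x, y)) volume 0 L1 :=
      hEcont.intervalIntegrable_of_Icc hL1.le
    have := intervalIntegral.integral_eq_sub_of_hasDeriv_right_of_le hL1.le hcont
      (fun x hx => (hd (x, y) ⟨hx, hy⟩).hasDerivWithinAt) hint
    rw [← this, intervalIntegral.integral_of_le hL1.le, integral_Ioc_eq_integral_Ioo]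
  rw [key]
  linarith [(hb y hy).1, (hb y hy).2]

lemma div_y (hL1 : 0 < L1) (hL2 : 0 < L2) {F E : ℝ × ℝ → ℝ}
    (hF : ContinuousOn F (Rect L1 L2)) (hE : ContinuousOn E (Rect L1 L2))
    (hd : ∀ p ∈ Om L1 L2, HasDerivAt (fun y => F (p.1, y)) (E p) p.2)
    (hb : ∀ x ∈ Ioo (0:ℝ) L1, F (x, 0) ≤ 0 ∧ 0 ≤ F (x, L2)) :
    0 ≤ ∫ p in Om L1 L2, E p := by
  have hEint : IntegrableOn E (Om L1 L2) := integrableOn_om hE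
  have fub : ∫ p in Om L1 L2, E p
      = ∫ x in Ioo (0:ℝ) L1, ∫ y in Ioo (0:ℝ) L2, E (x, y) := by
    rw [show (volume : Measure (ℝ × ℝ)).restrict (Om L1 L2)
        = ((volume : Measure ℝ).restrict (Ioo 0 L1)).prod
            ((volume : Measure ℝ).restrict (Ioo 0 L2)) by
      rw [Measure.volume_eq_prod, Measure.prod_restrict]; rfl]
    have : Integrable E (((volume : Measure ℝ).restrict (Ioo 0 L1)).prod
        ((volume : Measure ℝ).restrict (Ioo 0 L2))) := by
      rwa [Measure.prod_restrict, ← Measure.volume_eq_prod]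
    exact integral_prod E this
  rw [fub]
  apply setIntegral_nonneg measurableSet_Ioo
  intro x hx
  have hxI : x ∈ Icc (0:ℝ) L1 := Ioo_subset_Icc_self hx
  have key : ∫ y in Ioo (0:ℝ) L2, E (x, y) = F (x, L2) - F (x, 0) := by
    have hmap : MapsTo (fun y : ℝ => (x, y)) (Icc 0 L2) (Rect L1 L2) :=
      fun y hy => ⟨hxI, hy⟩
    have hcont : ContinuousOn (fun y => F (x, y)) (Icc 0 L2) :=
      hF.comp ((continuous_const.prodMk continuous_id).continuousOn) hmap
    have hEcont : ContinuousOn (fun y => E (x, y)) (Icc 0 L2) :=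
      hE.comp ((continuous_const.prodMk continuous_id).continuousOn) hmap
    have hint : IntervalIntegrable (fun y => E (x, y)) volume 0 L2 :=
      hEcont.intervalIntegrable_of_Icc hL2.le
    have := intervalIntegral.integral_eq_sub_of_hasDeriv_right_of_le hL2.le hcont
      (fun y hy => (hd (x, y) ⟨hx, hy⟩).hasDerivWithinAt) hint
    rw [← this, intervalIntegral.integral_of_le hL2.le, integral_Ioc_eq_integral_Ioo]
  rw [key]
  linarith [(hb x hx).1, (hb x hx).2]

lemma scalar_bound (A B v w N ω : ℝ) (hN : 0 ≤ N) (hvw : v^2 + w^2 = N^2)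
    (hs : (1/2) * Real.sqrt (A^2 + B^2) ≤ ω) :
    -ω * N ≤ -((1/2) * A * v) - (1/2) * B * w := by
  have h1 : A * v + B * w ≤ Real.sqrt (A^2 + B^2) * N := by
    have h2 : (A * v + B * w)^2 ≤ (A^2 + B^2) * N^2 := by
      rw [← hvw]; nlinarith [sq_nonneg (A*w - B*v)]
    calc A * v + B * w ≤ |A * v + B * w| := le_abs_self _
      _ = Real.sqrt ((A * v + B * w)^2) := (Real.sqrt_sq_eq_abs _).symm
      _ ≤ Real.sqrt ((A^2 + B^2) * N^2) := Real.sqrt_le_sqrt h2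
      _ = Real.sqrt (A^2 + B^2) * N := by
          rw [Real.sqrt_mul (by positivity), Real.sqrt_sq hN]
  nlinarith [mul_le_mul_of_nonneg_right hs hN, Real.sqrt_nonneg (A^2 + B^2)]

end Aux

/-- Quasi-positivity of the variable-coefficient elliptic-mode operator
`𝒯₂ u = T1(x,y)·∂x u + T2(x,y)·∂y u` with `T1 = [[α1,β1],[β1,-α1]]`,
`T2 = [[α2,β2],[β2,-α2]]`, `α1, α2 ≥ c0 > 0`, on pairs `(u1,u2)` with `u1 = 0` on
`Γ_W ∪ Γ_S` and `u2 = 0` on `Γ_E ∪ Γ_N`: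
`∫_Ω uᵗ·(T1·∂x u + T2·∂y u) ≥ -ω0·∫_Ω |u|²` where
`ω0 = (1/2)·sup √((∂x α1 + ∂y α2)² + (∂x β1 + ∂y β2)²)`. -/
theorem stmt9 (L1 L2 c0 : ℝ) (hL1 : 0 < L1) (hL2 : 0 < L2) (hc0 : 0 < c0)
    (α1 β1 α2 β2 : ℝ × ℝ → ℝ)
    (hα1 : ContDiffOn ℝ 1 α1 (Rect L1 L2)) (hβ1 : ContDiffOn ℝ 1 β1 (Rect L1 L2))
    (hα2 : ContDiffOn ℝ 1 α2 (Rect L1 L2)) (hβ2 : ContDiffOn ℝ 1 β2 (Rect L1 L2))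
    (hα1c : ∀ p ∈ Rect L1 L2, c0 ≤ α1 p) (hα2c : ∀ p ∈ Rect L1 L2, c0 ≤ α2 p)
    (ω0 : ℝ)
    (hω0 : ω0 = (1 / 2) * sSup ((fun p =>
      Real.sqrt ((pdx L1 L2 α1 p + pdy L1 L2 α2 p) ^ 2
        + (pdx L1 L2 β1 p + pdy L1 L2 β2 p) ^ 2)) '' Rect L1 L2))
    (u1 u2 : ℝ × ℝ → ℝ)
    (hu1 : ContDiffOn ℝ 1 u1 (Rect L1 L2)) (hu2 : ContDiffOn ℝ 1 u2 (Rect L1 L2))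
    (h1W : ∀ y ∈ Icc (0 : ℝ) L2, u1 (0, y) = 0)
    (h1S : ∀ x ∈ Icc (0 : ℝ) L1, u1 (x, 0) = 0)
    (h2E : ∀ y ∈ Icc (0 : ℝ) L2, u2 (L1, y) = 0)
    (h2N : ∀ x ∈ Icc (0 : ℝ) L1, u2 (x, L2) = 0) :
    -ω0 * (∫ p in Om L1 L2, ((u1 p) ^ 2 + (u2 p) ^ 2))
      ≤ ∫ p in Om L1 L2,
          (u1 p * (α1 p * pdx L1 L2 u1 p + β1 p * pdx L1 L2 u2 p
              + α2 p * pdy L1 L2 u1 p + β2 p * pdy L1 L2 u2 p)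
            + u2 p * (β1 p * pdx L1 L2 u1 p - α1 p * pdx L1 L2 u2 p
              + β2 p * pdy L1 L2 u1 p - α2 p * pdy L1 L2 u2 p)) := by
  -- continuity basics
  have cα1 := hα1.continuousOn; have cβ1 := hβ1.continuousOn
  have cα2 := hα2.continuousOn; have cβ2 := hβ2.continuousOn
  have cu1 := hu1.continuousOn; have cu2 := hu2.continuousOn
  have cpxα1 := pdx_contOn hL1 hL2 hα1; have cpxβ1 := pdx_contOn hL1 hL2 hβ1
  have cpyα2 := pdy_contOn hL1 hL2 hα2; have cpyβ2 := pdy_contOn hL1 hL2 hβ2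
  have cpxu1 := pdx_contOn hL1 hL2 hu1; have cpxu2 := pdx_contOn hL1 hL2 hu2
  have cpyu1 := pdy_contOn hL1 hL2 hu1; have cpyu2 := pdy_contOn hL1 hL2 hu2
  -- the flux functions and their divergence integrands
  set F : ℝ × ℝ → ℝ := fun p =>
    α1 p * (u1 p * u1 p - u2 p * u2 p) + 2 * β1 p * u1 p * u2 p with hFdef
  set G : ℝ × ℝ → ℝ := fun p =>
    α2 p * (u1 p * u1 p - u2 p * u2 p) + 2 * β2 p * u1 p * u2 p with hGdef
  set E1 : ℝ × ℝ → ℝ := fun p =>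
    pdx L1 L2 α1 p * (u1 p * u1 p - u2 p * u2 p)
      + α1 p * (pdx L1 L2 u1 p * u1 p + u1 p * pdx L1 L2 u1 p
          - (pdx L1 L2 u2 p * u2 p + u2 p * pdx L1 L2 u2 p))
      + (2 * pdx L1 L2 β1 p * u1 p * u2 p
          + 2 * β1 p * (pdx L1 L2 u1 p * u2 p + u1 p * pdx L1 L2 u2 p)) with hE1def
  set E2 : ℝ × ℝ → ℝ := fun p =>
    pdy L1 L2 α2 p * (u1 p * u1 p - u2 p * u2 p)
      + α2 p * (pdy L1 L2 u1 p * u1 p + u1 p * pdy L1 L2 u1 p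
          - (pdy L1 L2 u2 p * u2 p + u2 p * pdy L1 L2 u2 p))
      + (2 * pdy L1 L2 β2 p * u1 p * u2 p
          + 2 * β2 p * (pdy L1 L2 u1 p * u2 p + u1 p * pdy L1 L2 u2 p)) with hE2def
  set R : ℝ × ℝ → ℝ := fun p =>
    -((1/2) * (pdx L1 L2 α1 p + pdy L1 L2 α2 p) * (u1 p * u1 p - u2 p * u2 p))
      - (1/2) * (pdx L1 L2 β1 p + pdy L1 L2 β2 p) * (2 * u1 p * u2 p) with hRdef
  have hFc : ContinuousOn F (Rect L1 L2) :=
    ((cα1.mul ((cu1.mul cu1).sub (cu2.mul cu2))).add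
      (((continuousOn_const.mul cβ1).mul cu1).mul cu2))
  have hGc : ContinuousOn G (Rect L1 L2) :=
    ((cα2.mul ((cu1.mul cu1).sub (cu2.mul cu2))).add
      (((continuousOn_const.mul cβ2).mul cu1).mul cu2))
  have hE1c : ContinuousOn E1 (Rect L1 L2) :=
    ((cpxα1.mul ((cu1.mul cu1).sub (cu2.mul cu2))).add
      (cα1.mul (((cpxu1.mul cu1).add (cu1.mul cpxu1)).sub
        ((cpxu2.mul cu2).add (cu2.mul cpxu2))))).add
      ((((continuousOn_const.mul cpxβ1).mul cu1).mul cu2).add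
        ((continuousOn_const.mul cβ1).mul ((cpxu1.mul cu2).add (cu1.mul cpxu2))))
  have hE2c : ContinuousOn E2 (Rect L1 L2) :=
    ((cpyα2.mul ((cu1.mul cu1).sub (cu2.mul cu2))).add
      (cα2.mul (((cpyu1.mul cu1).add (cu1.mul cpyu1)).sub
        ((cpyu2.mul cu2).add (cu2.mul cpyu2))))).add
      ((((continuousOn_const.mul cpyβ2).mul cu1).mul cu2).add
        ((continuousOn_const.mul cβ2).mul ((cpyu1.mul cu2).add (cu1.mul cpyu2))))
  have hRc : ContinuousOn R (Rect L1 L2) :=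
    (((continuousOn_const.mul (cpxα1.add cpyα2)).mul
        ((cu1.mul cu1).sub (cu2.mul cu2))).neg).sub
      ((continuousOn_const.mul (cpxβ1.add cpyβ2)).mul
        ((continuousOn_const.mul cu1).mul cu2))
  -- derivative of F in x
  have hdF : ∀ p ∈ Om L1 L2, HasDerivAt (fun x => F (x, p.2)) (E1 p) p.1 := by
    intro p hp
    have dα1 := hasDerivAt_slice_x hα1 hp
    have dβ1 := hasDerivAt_slice_x hβ1 hp
    have du1 := hasDerivAt_slice_x hu1 hp
    have du2 := hasDerivAt_slice_x hu2 hp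
    have h := (dα1.mul ((du1.mul du1).sub (du2.mul du2))).add
      (((dβ1.const_mul (2:ℝ)).mul du1).mul du2)
    rw [hFdef, hE1def]
    convert h using 1
    · rfl
    · rfl
    · funext x; simp only [Pi.mul_apply, Pi.sub_apply, Pi.add_apply]
    · simp only [Pi.mul_apply, Pi.sub_apply]; ring
  have hdG : ∀ p ∈ Om L1 L2, HasDerivAt (fun y => G (p.1, y)) (E2 p) p.2 := by
    intro p hp
    have dα2 := hasDerivAt_slice_y hα2 hp
    have dβ2 := hasDerivAt_slice_y hβ2 hp
    have du1 := hasDerivAt_slice_y hu1 hp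
    have du2 := hasDerivAt_slice_y hu2 hp
    have h := (dα2.mul ((du1.mul du1).sub (du2.mul du2))).add
      (((dβ2.const_mul (2:ℝ)).mul du1).mul du2)
    rw [hGdef, hE2def]
    convert h using 1
    · rfl
    · rfl
    · funext x; simp only [Pi.mul_apply, Pi.sub_apply, Pi.add_apply]
    · simp only [Pi.mul_apply, Pi.sub_apply]; ring
  -- boundary signs
  have hbF : ∀ y ∈ Ioo (0:ℝ) L2, F (0, y) ≤ 0 ∧ 0 ≤ F (L1, y) := by
    intro y hy
    have hyI : y ∈ Icc (0:ℝ) L2 := Ioo_subset_Icc_self hy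
    have hm0 : ((0:ℝ), y) ∈ Rect L1 L2 := ⟨⟨le_rfl, hL1.le⟩, hyI⟩
    have hmL : ((L1:ℝ), y) ∈ Rect L1 L2 := ⟨⟨hL1.le, le_rfl⟩, hyI⟩
    constructor
    · have h0 := h1W y hyI
      have hα := hα1c _ hm0
      simp only [hFdef, h0]
      nlinarith [sq_nonneg (u2 (0, y))]
    · have h0 := h2E y hyI
      have hα := hα1c _ hmL
      simp only [hFdef, h0]
      nlinarith [sq_nonneg (u1 (L1, y))]
  have hbG : ∀ x ∈ Ioo (0:ℝ) L1, G (x, 0) ≤ 0 ∧ 0 ≤ G (x, L2) := by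
    intro x hx
    have hxI : x ∈ Icc (0:ℝ) L1 := Ioo_subset_Icc_self hx
    have hm0 : ((x:ℝ), (0:ℝ)) ∈ Rect L1 L2 := ⟨hxI, ⟨le_rfl, hL2.le⟩⟩
    have hmL : ((x:ℝ), L2) ∈ Rect L1 L2 := ⟨hxI, ⟨hL2.le, le_rfl⟩⟩
    constructor
    · have h0 := h1S x hxI
      have hα := hα2c _ hm0
      simp only [hGdef, h0]
      nlinarith [sq_nonneg (u2 (x, 0))]
    · have h0 := h2N x hxI
      have hα := hα2c _ hmL
      simp only [hGdef, h0]
      nlinarith [sq_nonneg (u1 (x, L2))]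
  have hDx : 0 ≤ ∫ p in Om L1 L2, E1 p := div_x hL1 hL2 hFc hE1c hdF hbF
  have hDy : 0 ≤ ∫ p in Om L1 L2, E2 p := div_y hL1 hL2 hGc hE2c hdG hbG
  -- R lower bound
  have hsupc : ContinuousOn (fun p =>
      Real.sqrt ((pdx L1 L2 α1 p + pdy L1 L2 α2 p) ^ 2
        + (pdx L1 L2 β1 p + pdy L1 L2 β2 p) ^ 2)) (Rect L1 L2) :=
    Real.continuous_sqrt.comp_continuousOn
      (((cpxα1.add cpyα2).pow 2).add ((cpxβ1.add cpyβ2).pow 2))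
  have hbdd : BddAbove ((fun p =>
      Real.sqrt ((pdx L1 L2 α1 p + pdy L1 L2 α2 p) ^ 2
        + (pdx L1 L2 β1 p + pdy L1 L2 β2 p) ^ 2)) '' Rect L1 L2) :=
    (rect_compact.image_of_continuousOn hsupc).bddAbove
  have hRlb : ∀ p ∈ Om L1 L2, -ω0 * ((u1 p)^2 + (u2 p)^2) ≤ R p := by
    intro p hp
    have hpR := om_subset_rect hp
    have hsup : (1/2) * Real.sqrt ((pdx L1 L2 α1 p + pdy L1 L2 α2 p) ^ 2
        + (pdx L1 L2 β1 p + pdy L1 L2 β2 p) ^ 2) ≤ ω0 := by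
      rw [hω0]
      have := le_csSup hbdd (mem_image_of_mem _ hpR)
      linarith
    have := scalar_bound (pdx L1 L2 α1 p + pdy L1 L2 α2 p)
      (pdx L1 L2 β1 p + pdy L1 L2 β2 p)
      (u1 p * u1 p - u2 p * u2 p) (2 * u1 p * u2 p)
      ((u1 p)^2 + (u2 p)^2) ω0 (by positivity) (by ring) hsup
    rw [hRdef]
    exact this
  -- integrabilities
  have hiE1 : IntegrableOn E1 (Om L1 L2) := integrableOn_om hE1c
  have hiE2 : IntegrableOn E2 (Om L1 L2) := integrableOn_om hE2c
  have hiR : IntegrableOn R (Om L1 L2) := integrableOn_om hRc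
  have hiN : IntegrableOn (fun p => (u1 p)^2 + (u2 p)^2) (Om L1 L2) :=
    integrableOn_om ((cu1.pow 2).add (cu2.pow 2))
  -- split the integral
  have hsplit : (∫ p in Om L1 L2,
        (u1 p * (α1 p * pdx L1 L2 u1 p + β1 p * pdx L1 L2 u2 p
            + α2 p * pdy L1 L2 u1 p + β2 p * pdy L1 L2 u2 p)
          + u2 p * (β1 p * pdx L1 L2 u1 p - α1 p * pdx L1 L2 u2 p
            + β2 p * pdy L1 L2 u1 p - α2 p * pdy L1 L2 u2 p)))
      = (1/2) * (∫ p in Om L1 L2, E1 p) + (1/2) * (∫ p in Om L1 L2, E2 p)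
          + ∫ p in Om L1 L2, R p := by
    calc (∫ p in Om L1 L2,
        (u1 p * (α1 p * pdx L1 L2 u1 p + β1 p * pdx L1 L2 u2 p
            + α2 p * pdy L1 L2 u1 p + β2 p * pdy L1 L2 u2 p)
          + u2 p * (β1 p * pdx L1 L2 u1 p - α1 p * pdx L1 L2 u2 p
            + β2 p * pdy L1 L2 u1 p - α2 p * pdy L1 L2 u2 p)))
        = ∫ p in Om L1 L2, ((1/2) * E1 p + (1/2) * E2 p + R p) := by
          apply setIntegral_congr_fun ((isOpen_Ioo.prod isOpen_Ioo).measurableSet)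
          intro p hp
          simp only [hE1def, hE2def, hRdef]
          ring
      _ = (∫ p in Om L1 L2, ((1/2) * E1 p + (1/2) * E2 p))
            + ∫ p in Om L1 L2, R p :=
          integral_add ((hiE1.const_mul _).add (hiE2.const_mul _)) hiR
      _ = ((∫ p in Om L1 L2, (1/2) * E1 p) + ∫ p in Om L1 L2, (1/2) * E2 p)
            + ∫ p in Om L1 L2, R p := by
          rw [integral_add (hiE1.const_mul _) (hiE2.const_mul _)]
      _ = (1/2) * (∫ p in Om L1 L2, E1 p) + (1/2) * (∫ p in Om L1 L2, E2 p)
            + ∫ p in Om L1 L2, R p := by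
          rw [integral_const_mul, integral_const_mul]
  rw [hsplit]
  have hmono : -ω0 * (∫ p in Om L1 L2, ((u1 p)^2 + (u2 p)^2))
      ≤ ∫ p in Om L1 L2, R p := by
    rw [← integral_const_mul]
    exact setIntegral_mono_on (hiN.const_mul _) hiR
      ((isOpen_Ioo.prod isOpen_Ioo).measurableSet) hRlb
  linarith
end

section
/- Let L1, L2 > 0 and Ω = (0,L1)×(0,L2). Let α1, α2, β1, β2 be continuously differentiable real-valued functions on the closed rectangle [0,L1]×[0,L2] with α1 ≥ c0 > 0 and α2 ≥ c0 > 0 everywhere, and set T1 = [[α1, β1], [β1, −α1]], T2 = [[α2, β2], [β2, −α2]], and ω0 = (1/2)·sup_{[0,L1]×[0,L2]} ((∂x α1 + ∂y α2)² + (∂x β1 + ∂y β2)²)^{1/2}. Let ū = (ū1, ū2) be continuously differentiable on the closed rectangle and satisfy the adjoint boundary conditions: β1·ū1 − α1·ū2 = 0 on {x=0}; α1·ū1 + β1·ū2 = 0 on {x=L1}; β2·ū1 − α2·ū2 = 0 on {y=0}; α2·ū1 + β2·ū2 = 0 on {y=L2}. Then ∫_Ω ū(x,y)ᵗ·( −∂x(T1(x,y)·ū(x,y))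 − ∂y(T2(x,y)·ū(x,y)) ) dx dy ≥ −ω0·∫_Ω |ū(x,y)|² dx dy. -/
open Set MeasureTheory

/-- derivative of `f*g + h*k`, applied to a vector. -/
lemma fdw_comb_add {R : Set (ℝ × ℝ)} (hud : UniqueDiffOn ℝ R) {f g h k : ℝ × ℝ → ℝ}
    {p : ℝ × ℝ} (hp : p ∈ R)
    (hf : DifferentiableWithinAt ℝ f R p) (hg : DifferentiableWithinAt ℝ g R p)
    (hh : DifferentiableWithinAt ℝ h R p) (hk : DifferentiableWithinAt ℝ k R p)
    (v : ℝ × ℝ) :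
    fderivWithin ℝ (fun q => f q * g q + h q * k q) R p v
      = f p * fderivWithin ℝ g R p v + g p * fderivWithin ℝ f R p v
        + h p * fderivWithin ℝ k R p v + k p * fderivWithin ℝ h R p v := by
  show fderivWithin ℝ (f * g + h * k) R p v = _
  rw [((hf.hasFDerivWithinAt.mul hg.hasFDerivWithinAt).add
    (hh.hasFDerivWithinAt.mul hk.hasFDerivWithinAt)).fderivWithin (hud p hp)]
  simp [smul_eq_mul]
  ring

/-- derivative of `f*g - h*k`, applied to a vector. -/
lemma fdw_comb_sub {R : Set (ℝ × ℝ)} (hud : UniqueDiffOn ℝ R) {f g h k : ℝ × ℝ → ℝ}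
    {p : ℝ × ℝ} (hp : p ∈ R)
    (hf : DifferentiableWithinAt ℝ f R p) (hg : DifferentiableWithinAt ℝ g R p)
    (hh : DifferentiableWithinAt ℝ h R p) (hk : DifferentiableWithinAt ℝ k R p)
    (v : ℝ × ℝ) :
    fderivWithin ℝ (fun q => f q * g q - h q * k q) R p v
      = f p * fderivWithin ℝ g R p v + g p * fderivWithin ℝ f R p v
        - h p * fderivWithin ℝ k R p v - k p * fderivWithin ℝ h R p v := by
  show fderivWithin ℝ (f * g - h * k) R p v = _
  rw [((hf.hasFDerivWithinAt.mul hg.hasFDerivWithinAt).sub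
    (hh.hasFDerivWithinAt.mul hk.hasFDerivWithinAt)).fderivWithin (hud p hp)]
  simp [smul_eq_mul]
  ring

/-- derivative of `(1/2)*(f*g + h*k)`, applied to a vector. -/
lemma fdw_comb_half {R : Set (ℝ × ℝ)} (hud : UniqueDiffOn ℝ R) {f g h k : ℝ × ℝ → ℝ}
    {p : ℝ × ℝ} (hp : p ∈ R)
    (hf : DifferentiableWithinAt ℝ f R p) (hg : DifferentiableWithinAt ℝ g R p)
    (hh : DifferentiableWithinAt ℝ h R p) (hk : DifferentiableWithinAt ℝ k R p)
    (v : ℝ × ℝ) :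
    fderivWithin ℝ (fun q => (1/2 : ℝ) * (f q * g q + h q * k q)) R p v
      = (1/2) * (f p * fderivWithin ℝ g R p v + g p * fderivWithin ℝ f R p v
        + h p * fderivWithin ℝ k R p v + k p * fderivWithin ℝ h R p v) := by
  show fderivWithin ℝ (fun y => (1/2 : ℝ) * (f * g + h * k) y) R p v = _
  rw [(((hf.hasFDerivWithinAt.mul hg.hasFDerivWithinAt).add
    (hh.hasFDerivWithinAt.mul hk.hasFDerivWithinAt)).const_mul (1/2 : ℝ)).fderivWithin
    (hud p hp)]
  simp [smul_eq_mul]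
  ring

set_option maxHeartbeats 1000000 in
/-- Quasi-positivity of the formal adjoint `𝒯₂* ū = -∂x(T1·ū) - ∂y(T2·ū)` of the
variable-coefficient elliptic-mode operator, on pairs `ū = (ū1, ū2)` satisfying the
adjoint boundary conditions: `∫_Ω ūᵗ·(-∂x(T1·ū) - ∂y(T2·ū)) ≥ -ω0·∫_Ω |ū|²` where
`ω0 = (1/2)·sup √((∂x α1 + ∂y α2)² + (∂x β1 + ∂y β2)²)`. -/
theorem stmt10 (L1 L2 c0 : ℝ) (hL1 : 0 < L1) (hL2 : 0 < L2) (hc0 : 0 < c0)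
    (α1 β1 α2 β2 : ℝ × ℝ → ℝ)
    (hα1 : ContDiffOn ℝ 1 α1 (Rect L1 L2)) (hβ1 : ContDiffOn ℝ 1 β1 (Rect L1 L2))
    (hα2 : ContDiffOn ℝ 1 α2 (Rect L1 L2)) (hβ2 : ContDiffOn ℝ 1 β2 (Rect L1 L2))
    (hα1c : ∀ p ∈ Rect L1 L2, c0 ≤ α1 p) (hα2c : ∀ p ∈ Rect L1 L2, c0 ≤ α2 p)
    (ω0 : ℝ)
    (hω0 : ω0 = (1 / 2) * sSup ((fun p =>
      Real.sqrt ((pdx L1 L2 α1 p + pdy L1 L2 α2 p) ^ 2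
        + (pdx L1 L2 β1 p + pdy L1 L2 β2 p) ^ 2)) '' Rect L1 L2))
    (u1 u2 : ℝ × ℝ → ℝ)
    (hu1 : ContDiffOn ℝ 1 u1 (Rect L1 L2)) (hu2 : ContDiffOn ℝ 1 u2 (Rect L1 L2))
    (hW : ∀ y ∈ Icc (0 : ℝ) L2, β1 (0, y) * u1 (0, y) - α1 (0, y) * u2 (0, y) = 0)
    (hE : ∀ y ∈ Icc (0 : ℝ) L2, α1 (L1, y) * u1 (L1, y) + β1 (L1, y) * u2 (L1, y) = 0)
    (hS : ∀ x ∈ Icc (0 : ℝ) L1, β2 (x, 0) * u1 (x, 0) - α2 (x, 0) * u2 (x, 0) = 0)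
    (hN : ∀ x ∈ Icc (0 : ℝ) L1, α2 (x, L2) * u1 (x, L2) + β2 (x, L2) * u2 (x, L2) = 0) :
    -ω0 * (∫ p in Om L1 L2, ((u1 p) ^ 2 + (u2 p) ^ 2))
      ≤ ∫ p in Om L1 L2,
          (u1 p * (-(pdx L1 L2 (fun q => α1 q * u1 q + β1 q * u2 q) p)
              - pdy L1 L2 (fun q => α2 q * u1 q + β2 q * u2 q) p)
            + u2 p * (-(pdx L1 L2 (fun q => β1 q * u1 q - α1 q * u2 q) p)
              - pdy L1 L2 (fun q => β2 q * u1 q - α2 q * u2 q) p)) := by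
  have hud : UniqueDiffOn ℝ (Rect L1 L2) := (uniqueDiffOn_Icc hL1).prod (uniqueDiffOn_Icc hL2)
  have hcomp : IsCompact (Rect L1 L2) := isCompact_Icc.prod isCompact_Icc
  have hRmeas : MeasurableSet (Rect L1 L2) := hcomp.measurableSet
  have hOmR : Om L1 L2 ⊆ Rect L1 L2 := prod_mono Ioo_subset_Icc_self Ioo_subset_Icc_self
  set A : ℝ × ℝ → ℝ := fun q => α1 q * u1 q + β1 q * u2 q with hAdef
  set B : ℝ × ℝ → ℝ := fun q => β1 q * u1 q - α1 q * u2 q with hBdef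
  set C : ℝ × ℝ → ℝ := fun q => α2 q * u1 q + β2 q * u2 q with hCdef
  set D : ℝ × ℝ → ℝ := fun q => β2 q * u1 q - α2 q * u2 q with hDdef
  set F : ℝ × ℝ → ℝ := fun q => (1/2 : ℝ) * (u1 q * A q + u2 q * B q) with hFdef
  set G : ℝ × ℝ → ℝ := fun q => (1/2 : ℝ) * (u1 q * C q + u2 q * D q) with hGdef
  have hA : ContDiffOn ℝ 1 A (Rect L1 L2) := (hα1.mul hu1).add (hβ1.mul hu2)
  have hB : ContDiffOn ℝ 1 B (Rect L1 L2) := (hβ1.mul hu1).sub (hα1.mul hu2)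
  have hC : ContDiffOn ℝ 1 C (Rect L1 L2) := (hα2.mul hu1).add (hβ2.mul hu2)
  have hD : ContDiffOn ℝ 1 D (Rect L1 L2) := (hβ2.mul hu1).sub (hα2.mul hu2)
  have hF : ContDiffOn ℝ 1 F (Rect L1 L2) :=
    contDiffOn_const.mul ((hu1.mul hA).add (hu2.mul hB))
  have hG : ContDiffOn ℝ 1 G (Rect L1 L2) :=
    contDiffOn_const.mul ((hu1.mul hC).add (hu2.mul hD))
  -- measure identity
  have hmeq : (volume : Measure (ℝ × ℝ)).restrict (Om L1 L2) = volume.restrict (Rect L1 L2) := by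
    rw [Om, Rect, Measure.volume_eq_prod, ← Measure.prod_restrict,
      Measure.restrict_congr_set Ioo_ae_eq_Icc, Measure.restrict_congr_set Ioo_ae_eq_Icc,
      Measure.prod_restrict]
  -- key pointwise identity
  have key : ∀ p ∈ Rect L1 L2,
      u1 p * (-(pdx L1 L2 A p) - pdy L1 L2 C p) + u2 p * (-(pdx L1 L2 B p) - pdy L1 L2 D p)
      = -(fderivWithin ℝ F (Rect L1 L2) p (1, 0) + fderivWithin ℝ G (Rect L1 L2) p (0, 1))
        - (1/2) * ((pdx L1 L2 α1 p + pdy L1 L2 α2 p) * (u1 p ^ 2 - u2 p ^ 2)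
          + 2 * (pdx L1 L2 β1 p + pdy L1 L2 β2 p) * (u1 p * u2 p)) := by
    intro p hp
    have dα1 : DifferentiableWithinAt ℝ α1 (Rect L1 L2) p := (hα1.differentiableOn one_ne_zero) p hp
    have dβ1 : DifferentiableWithinAt ℝ β1 (Rect L1 L2) p := (hβ1.differentiableOn one_ne_zero) p hp
    have dα2 : DifferentiableWithinAt ℝ α2 (Rect L1 L2) p := (hα2.differentiableOn one_ne_zero) p hp
    have dβ2 : DifferentiableWithinAt ℝ β2 (Rect L1 L2) p := (hβ2.differentiableOn one_ne_zero) p hp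
    have du1 : DifferentiableWithinAt ℝ u1 (Rect L1 L2) p := (hu1.differentiableOn one_ne_zero) p hp
    have du2 : DifferentiableWithinAt ℝ u2 (Rect L1 L2) p := (hu2.differentiableOn one_ne_zero) p hp
    have dA : DifferentiableWithinAt ℝ A (Rect L1 L2) p := (hA.differentiableOn one_ne_zero) p hp
    have dB : DifferentiableWithinAt ℝ B (Rect L1 L2) p := (hB.differentiableOn one_ne_zero) p hp
    have dC : DifferentiableWithinAt ℝ C (Rect L1 L2) p := (hC.differentiableOn one_ne_zero) p hp
    have dD : DifferentiableWithinAt ℝ D (Rect L1 L2) p := (hD.differentiableOn one_ne_zero) p hp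
    have e1 : pdx L1 L2 A p = α1 p * pdx L1 L2 u1 p + u1 p * pdx L1 L2 α1 p
        + β1 p * pdx L1 L2 u2 p + u2 p * pdx L1 L2 β1 p := by
      simp only [pdx, hAdef]
      exact fdw_comb_add hud hp dα1 du1 dβ1 du2 (1, 0)
    have e2 : pdx L1 L2 B p = β1 p * pdx L1 L2 u1 p + u1 p * pdx L1 L2 β1 p
        - α1 p * pdx L1 L2 u2 p - u2 p * pdx L1 L2 α1 p := by
      simp only [pdx, hBdef]
      exact fdw_comb_sub hud hp dβ1 du1 dα1 du2 (1, 0)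
    have e3 : pdy L1 L2 C p = α2 p * pdy L1 L2 u1 p + u1 p * pdy L1 L2 α2 p
        + β2 p * pdy L1 L2 u2 p + u2 p * pdy L1 L2 β2 p := by
      simp only [pdy, hCdef]
      exact fdw_comb_add hud hp dα2 du1 dβ2 du2 (0, 1)
    have e4 : pdy L1 L2 D p = β2 p * pdy L1 L2 u1 p + u1 p * pdy L1 L2 β2 p
        - α2 p * pdy L1 L2 u2 p - u2 p * pdy L1 L2 α2 p := by
      simp only [pdy, hDdef]
      exact fdw_comb_sub hud hp dβ2 du1 dα2 du2 (0, 1)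
    have e5 : fderivWithin ℝ F (Rect L1 L2) p (1, 0)
        = (1/2) * (u1 p * pdx L1 L2 A p + A p * pdx L1 L2 u1 p
          + u2 p * pdx L1 L2 B p + B p * pdx L1 L2 u2 p) := by
      simp only [pdx, hFdef]
      exact fdw_comb_half hud hp du1 dA du2 dB (1, 0)
    have e6 : fderivWithin ℝ G (Rect L1 L2) p (0, 1)
        = (1/2) * (u1 p * pdy L1 L2 C p + C p * pdy L1 L2 u1 p
          + u2 p * pdy L1 L2 D p + D p * pdy L1 L2 u2 p) := by
      simp only [pdy, hGdef]
      exact fdw_comb_half hud hp du1 dC du2 dD (0, 1)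
    have hAv : A p = α1 p * u1 p + β1 p * u2 p := by rw [hAdef]
    have hBv : B p = β1 p * u1 p - α1 p * u2 p := by rw [hBdef]
    have hCv : C p = α2 p * u1 p + β2 p * u2 p := by rw [hCdef]
    have hDv : D p = β2 p * u1 p - α2 p * u2 p := by rw [hDdef]
    rw [e5, e6, e1, e2, e3, e4, hAv, hBv, hCv, hDv]
    ring
  -- continuity facts
  have cpdx : ∀ (f : ℝ × ℝ → ℝ), ContDiffOn ℝ 1 f (Rect L1 L2) →
      ContinuousOn (fun p => pdx L1 L2 f p) (Rect L1 L2) := by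
    intro f hf
    simp only [pdx]
    exact (hf.continuousOn_fderivWithin hud le_rfl).clm_apply continuousOn_const
  have cpdy : ∀ (f : ℝ × ℝ → ℝ), ContDiffOn ℝ 1 f (Rect L1 L2) →
      ContinuousOn (fun p => pdy L1 L2 f p) (Rect L1 L2) := by
    intro f hf
    simp only [pdy]
    exact (hf.continuousOn_fderivWithin hud le_rfl).clm_apply continuousOn_const
  have cdiv : ContinuousOn (fun x => fderivWithin ℝ F (Rect L1 L2) x (1, 0)
      + fderivWithin ℝ G (Rect L1 L2) x (0, 1)) (Rect L1 L2) :=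
    ((hF.continuousOn_fderivWithin hud le_rfl).clm_apply continuousOn_const).add
      ((hG.continuousOn_fderivWithin hud le_rfl).clm_apply continuousOn_const)
  have cint : ContinuousOn (fun p =>
      u1 p * (-(pdx L1 L2 A p) - pdy L1 L2 C p)
        + u2 p * (-(pdx L1 L2 B p) - pdy L1 L2 D p)) (Rect L1 L2) :=
    ((hu1.continuousOn).mul (((cpdx A hA).neg).sub (cpdy C hC))).add
      ((hu2.continuousOn).mul (((cpdx B hB).neg).sub (cpdy D hD)))
  have ch : ContinuousOn (fun p =>
      (1/2 : ℝ) * ((pdx L1 L2 α1 p + pdy L1 L2 α2 p) * (u1 p ^ 2 - u2 p ^ 2)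
        + 2 * (pdx L1 L2 β1 p + pdy L1 L2 β2 p) * (u1 p * u2 p))) (Rect L1 L2) := by
    apply continuousOn_const.mul
    exact (((cpdx α1 hα1).add (cpdy α2 hα2)).mul
        (((hu1.continuousOn).pow 2).sub ((hu2.continuousOn).pow 2))).add
      ((continuousOn_const.mul ((cpdx β1 hβ1).add (cpdy β2 hβ2))).mul
        ((hu1.continuousOn).mul (hu2.continuousOn)))
  have cu : ContinuousOn (fun p => u1 p ^ 2 + u2 p ^ 2) (Rect L1 L2) :=
    ((hu1.continuousOn).pow 2).add ((hu2.continuousOn).pow 2)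
  -- integrability
  have Idiv : IntegrableOn (fun x => fderivWithin ℝ F (Rect L1 L2) x (1, 0)
      + fderivWithin ℝ G (Rect L1 L2) x (0, 1)) (Rect L1 L2) :=
    cdiv.integrableOn_compact hcomp
  have Ih : IntegrableOn (fun p =>
      (1/2 : ℝ) * ((pdx L1 L2 α1 p + pdy L1 L2 α2 p) * (u1 p ^ 2 - u2 p ^ 2)
        + 2 * (pdx L1 L2 β1 p + pdy L1 L2 β2 p) * (u1 p * u2 p))) (Rect L1 L2) :=
    ch.integrableOn_compact hcomp
  have Iu : IntegrableOn (fun p => u1 p ^ 2 + u2 p ^ 2) (Rect L1 L2) :=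
    cu.integrableOn_compact hcomp
  -- divergence theorem
  have hRI : Rect L1 L2 = Icc ((0 : ℝ), (0 : ℝ)) (L1, L2) := by
    rw [Rect]; exact Icc_prod_Icc 0 L1 0 L2
  have HdF : ∀ x ∈ Ioo (0 : ℝ) L1 ×ˢ Ioo (0 : ℝ) L2 \ (∅ : Set (ℝ × ℝ)),
      HasFDerivAt F (fderivWithin ℝ F (Rect L1 L2) x) x := by
    intro x hx
    have hxo : x ∈ Om L1 L2 := by rw [Om]; exact hx.1
    have hnh : Rect L1 L2 ∈ nhds x :=
      mem_nhds_iff.2 ⟨Om L1 L2, hOmR, isOpen_Ioo.prod isOpen_Ioo, hxo⟩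
    exact ((hF.differentiableOn one_ne_zero x (hOmR hxo)).hasFDerivWithinAt).hasFDerivAt hnh
  have HdG : ∀ x ∈ Ioo (0 : ℝ) L1 ×ˢ Ioo (0 : ℝ) L2 \ (∅ : Set (ℝ × ℝ)),
      HasFDerivAt G (fderivWithin ℝ G (Rect L1 L2) x) x := by
    intro x hx
    have hxo : x ∈ Om L1 L2 := by rw [Om]; exact hx.1
    have hnh : Rect L1 L2 ∈ nhds x :=
      mem_nhds_iff.2 ⟨Om L1 L2, hOmR, isOpen_Ioo.prod isOpen_Ioo, hxo⟩
    exact ((hG.differentiableOn one_ne_zero x (hOmR hxo)).hasFDerivWithinAt).hasFDerivAt hnh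
  have hdivthm := integral_divergence_prod_Icc_of_hasFDerivAt_off_countable_of_le F G
    (fun x => fderivWithin ℝ F (Rect L1 L2) x) (fun x => fderivWithin ℝ G (Rect L1 L2) x)
    ((0 : ℝ), (0 : ℝ)) (L1, L2) ⟨hL1.le, hL2.le⟩ ∅ countable_empty
    (hRI ▸ hF.continuousOn) (hRI ▸ hG.continuousOn) HdF HdG (hRI ▸ Idiv)
  -- boundary bounds
  have b1 : ∫ x in (0 : ℝ)..L1, G (x, L2) ≤ 0 := by
    have h := intervalIntegral.integral_nonneg (μ := volume) (f := fun x => -G (x, L2)) hL1.le ?_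
    · rw [intervalIntegral.integral_neg] at h; linarith
    · intro x hx
      show 0 ≤ -G (x, L2)
      have hmem : ((x : ℝ), L2) ∈ Rect L1 L2 := ⟨hx, ⟨hL2.le, le_rfl⟩⟩
      have hα := hα2c (x, L2) hmem
      have hbc := hN x hx
      have heq : G (x, L2) = -(1/2) * (α2 (x, L2) * (u1 (x, L2) ^ 2 + u2 (x, L2) ^ 2)) := by
        simp only [hGdef, hCdef, hDdef]
        linear_combination (u1 (x, L2)) * hbc
      rw [heq]
      nlinarith [sq_nonneg (u1 (x, L2)), sq_nonneg (u2 (x, L2))]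
  have b2 : 0 ≤ ∫ x in (0 : ℝ)..L1, G (x, 0) := by
    apply intervalIntegral.integral_nonneg hL1.le
    intro x hx
    have hmem : ((x : ℝ), (0 : ℝ)) ∈ Rect L1 L2 := ⟨hx, ⟨le_rfl, hL2.le⟩⟩
    have hα := hα2c (x, 0) hmem
    have hbc := hS x hx
    have heq : G (x, 0) = (1/2) * (α2 (x, 0) * (u1 (x, 0) ^ 2 + u2 (x, 0) ^ 2)) := by
      simp only [hGdef, hCdef, hDdef]
      linear_combination (u2 (x, 0)) * hbc
    rw [heq]
    nlinarith [sq_nonneg (u1 (x, 0)), sq_nonneg (u2 (x, 0))]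
  have b3 : ∫ y in (0 : ℝ)..L2, F (L1, y) ≤ 0 := by
    have h := intervalIntegral.integral_nonneg (μ := volume) (f := fun y => -F (L1, y)) hL2.le ?_
    · rw [intervalIntegral.integral_neg] at h; linarith
    · intro y hy
      show 0 ≤ -F (L1, y)
      have hmem : ((L1 : ℝ), y) ∈ Rect L1 L2 := ⟨⟨hL1.le, le_rfl⟩, hy⟩
      have hα := hα1c (L1, y) hmem
      have hbc := hE y hy
      have heq : F (L1, y) = -(1/2) * (α1 (L1, y) * (u1 (L1, y) ^ 2 + u2 (L1, y) ^ 2)) := by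
        simp only [hFdef, hAdef, hBdef]
        linear_combination (u1 (L1, y)) * hbc
      rw [heq]
      nlinarith [sq_nonneg (u1 (L1, y)), sq_nonneg (u2 (L1, y))]
  have b4 : 0 ≤ ∫ y in (0 : ℝ)..L2, F (0, y) := by
    apply intervalIntegral.integral_nonneg hL2.le
    intro y hy
    have hmem : ((0 : ℝ), y) ∈ Rect L1 L2 := ⟨⟨le_rfl, hL1.le⟩, hy⟩
    have hα := hα1c (0, y) hmem
    have hbc := hW y hy
    have heq : F (0, y) = (1/2) * (α1 (0, y) * (u1 (0, y) ^ 2 + u2 (0, y) ^ 2)) := by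
      simp only [hFdef, hAdef, hBdef]
      linear_combination (u2 (0, y)) * hbc
    rw [heq]
    nlinarith [sq_nonneg (u1 (0, y)), sq_nonneg (u2 (0, y))]
  have hdivle : ∫ x in Rect L1 L2, (fderivWithin ℝ F (Rect L1 L2) x (1, 0)
      + fderivWithin ℝ G (Rect L1 L2) x (0, 1)) ≤ 0 := by
    nth_rewrite 1 [hRI]
    have hdt : ∫ x in Icc ((0 : ℝ), (0 : ℝ)) (L1, L2),
        (fderivWithin ℝ F (Rect L1 L2) x (1, 0) + fderivWithin ℝ G (Rect L1 L2) x (0, 1))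
        = (((∫ x in (0 : ℝ)..L1, G (x, L2)) - ∫ x in (0 : ℝ)..L1, G (x, 0))
          + ∫ y in (0 : ℝ)..L2, F (L1, y)) - ∫ y in (0 : ℝ)..L2, F (0, y) := hdivthm
    rw [hdt]
    linarith
  -- pointwise bound for h term
  have hbdd : BddAbove ((fun p =>
      Real.sqrt ((pdx L1 L2 α1 p + pdy L1 L2 α2 p) ^ 2
        + (pdx L1 L2 β1 p + pdy L1 L2 β2 p) ^ 2)) '' Rect L1 L2) := by
    apply hcomp.bddAbove_image
    apply Real.continuous_sqrt.comp_continuousOn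
    exact (((cpdx α1 hα1).add (cpdy α2 hα2)).pow 2).add (((cpdx β1 hβ1).add (cpdy β2 hβ2)).pow 2)
  have hpt : ∀ p ∈ Rect L1 L2,
      (1/2 : ℝ) * ((pdx L1 L2 α1 p + pdy L1 L2 α2 p) * (u1 p ^ 2 - u2 p ^ 2)
        + 2 * (pdx L1 L2 β1 p + pdy L1 L2 β2 p) * (u1 p * u2 p))
      ≤ ω0 * (u1 p ^ 2 + u2 p ^ 2) := by
    intro p hp
    set a := pdx L1 L2 α1 p + pdy L1 L2 α2 p with ha
    set b := pdx L1 L2 β1 p + pdy L1 L2 β2 p with hb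
    set s := Real.sqrt (a ^ 2 + b ^ 2) with hs
    have hs0 : 0 ≤ s := Real.sqrt_nonneg _
    have hsq : s ^ 2 = a ^ 2 + b ^ 2 := Real.sq_sqrt (by positivity)
    have hsmem : s ∈ (fun p =>
        Real.sqrt ((pdx L1 L2 α1 p + pdy L1 L2 α2 p) ^ 2
          + (pdx L1 L2 β1 p + pdy L1 L2 β2 p) ^ 2)) '' Rect L1 L2 := ⟨p, hp, rfl⟩
    have hωs : (1/2 : ℝ) * s ≤ ω0 := by
      rw [hω0]
      have := le_csSup hbdd hsmem
      linarith
    set X := u1 p ^ 2 - u2 p ^ 2 with hX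
    set Y := 2 * (u1 p * u2 p) with hY
    set N := u1 p ^ 2 + u2 p ^ 2 with hN
    have hN0 : 0 ≤ N := by positivity
    have hXY : X ^ 2 + Y ^ 2 = N ^ 2 := by rw [hX, hY, hN]; ring
    have h3 : (a * X + b * Y) ^ 2 ≤ (s * N) ^ 2 := by
      have : (a * X + b * Y) ^ 2 ≤ (a ^ 2 + b ^ 2) * (X ^ 2 + Y ^ 2) := by
        nlinarith [sq_nonneg (a * Y - b * X)]
      calc (a * X + b * Y) ^ 2 ≤ (a ^ 2 + b ^ 2) * (X ^ 2 + Y ^ 2) := this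
        _ = (s * N) ^ 2 := by rw [hXY, ← hsq]; ring
    have h4 : a * X + b * Y ≤ s * N := by
      have h5 : a * X + b * Y ≤ |a * X + b * Y| := le_abs_self _
      have h6 : |a * X + b * Y| ≤ s * N := by
        have := Real.sqrt_le_sqrt h3
        rwa [Real.sqrt_sq_eq_abs, Real.sqrt_sq (by positivity)] at this
      linarith
    have hbY : 2 * b * (u1 p * u2 p) = b * Y := by rw [hY]; ring
    rw [hbY]
    have h7 : 1/2 * s * N ≤ ω0 * N := mul_le_mul_of_nonneg_right hωs hN0
    clear_value a b s X Y N
    calc (1/2 : ℝ) * (a * X + b * Y) ≤ 1/2 * (s * N) := by linarith [h4]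
      _ ≤ ω0 * N := by linarith
  -- assemble
  rw [hmeq]
  have hsplit : ∫ p in Rect L1 L2,
      (u1 p * (-(pdx L1 L2 A p) - pdy L1 L2 C p) + u2 p * (-(pdx L1 L2 B p) - pdy L1 L2 D p))
      = -(∫ x in Rect L1 L2, (fderivWithin ℝ F (Rect L1 L2) x (1, 0)
          + fderivWithin ℝ G (Rect L1 L2) x (0, 1)))
        - ∫ p in Rect L1 L2, ((1/2 : ℝ) * ((pdx L1 L2 α1 p + pdy L1 L2 α2 p) * (u1 p ^ 2 - u2 p ^ 2)
          + 2 * (pdx L1 L2 β1 p + pdy L1 L2 β2 p) * (u1 p * u2 p))) := by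
    rw [setIntegral_congr_fun hRmeas (fun p hp => key p hp)]
    have Idivneg : IntegrableOn (fun x => -(fderivWithin ℝ F (Rect L1 L2) x (1, 0)
        + fderivWithin ℝ G (Rect L1 L2) x (0, 1))) (Rect L1 L2) := Idiv.neg
    rw [integral_sub Idivneg Ih, integral_neg]
  rw [hsplit]
  have hmono : ∫ p in Rect L1 L2, ((1/2 : ℝ) * ((pdx L1 L2 α1 p + pdy L1 L2 α2 p) * (u1 p ^ 2 - u2 p ^ 2)
      + 2 * (pdx L1 L2 β1 p + pdy L1 L2 β2 p) * (u1 p * u2 p)))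
      ≤ ω0 * ∫ p in Rect L1 L2, (u1 p ^ 2 + u2 p ^ 2) := by
    rw [← integral_const_mul]
    exact setIntegral_mono_on Ih (Iu.const_mul ω0) hRmeas hpt
  linarith
end

section
/- Let L1, L2 > 0 and Ω = (0,L1)×(0,L2), with boundary sides Γ_W = {x=0}, Γ_E = {x=L1}, Γ_S = {y=0}, Γ_N = {y=L2}. For each j ∈ {W,E,S,N} let (a_j, b_j) ∈ ℝ² with (a_j, b_j) ≠ (0,0). Let u = (u1, u2) be a pair of functions continuously differentiable on the closed rectangle [0,L1]×[0,L2] such that a_j·u1 + b_j·u2 = 0 at every point of Γ_j, for each j ∈ {W,E,S,N}. Then ∫_Ω ∂x u2 · ∂y u1 dx dy = ∫_Ω ∂x u1 · ∂y u2 dx dy. -/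
set_option maxHeartbeats 1000000

open Set MeasureTheory

namespace Grisvard

/-- The planar cross product. -/
def cross (p q : ℝ × ℝ) : ℝ := p.1 * q.2 - p.2 * q.1

lemma cross_line {a b : ℝ} (hab : ¬(a = 0 ∧ b = 0)) {p q : ℝ × ℝ}
    (hp : a * p.1 + b * p.2 = 0) (hq : a * q.1 + b * q.2 = 0) : cross p q = 0 := by
  unfold cross
  rcases not_and_or.mp hab with h | h
  · have key : a * (p.1 * q.2 - p.2 * q.1)
        = (a * p.1 + b * p.2) * q.2 - p.2 * (a * q.1 + b * q.2) := by ring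
    rw [hp, hq] at key; simp at key
    rcases key with h' | h' <;> [exact absurd h' h; exact h']
  · have key : b * (p.1 * q.2 - p.2 * q.1)
        = p.1 * (a * q.1 + b * q.2) - (a * p.1 + b * p.2) * q.1 := by ring
    rw [hp, hq] at key; simp at key
    rcases key with h' | h' <;> [exact absurd h' h; exact h']

/-- Fubini, symmetric version, for set integrals over a product set. -/
lemma setIntegral_prod_symm'' {E : Type*} [NormedAddCommGroup E] [NormedSpace ℝ E]
    {μ ν : Measure ℝ} [SigmaFinite μ] [SigmaFinite ν] (f : ℝ × ℝ → E) {s t : Set ℝ}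
    (hf : IntegrableOn f (s ×ˢ t) (μ.prod ν)) :
    ∫ z in s ×ˢ t, f z ∂(μ.prod ν) = ∫ y in t, ∫ x in s, f (x, y) ∂μ ∂ν := by
  unfold IntegrableOn at hf
  rw [← Measure.prod_restrict] at hf ⊢
  exact integral_prod_symm f hf

lemma abs_cross_le (p q : ℝ × ℝ) : |cross p q| ≤ 2 * ‖p‖ * ‖q‖ := by
  have h1 : |p.1| ≤ ‖p‖ := by simpa using norm_fst_le p
  have h2 : |p.2| ≤ ‖p‖ := by simpa using norm_snd_le p
  have h3 : |q.1| ≤ ‖q‖ := by simpa using norm_fst_le q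
  have h4 : |q.2| ≤ ‖q‖ := by simpa using norm_snd_le q
  have := abs_nonneg p.1; have := abs_nonneg p.2; have := abs_nonneg q.1; have := abs_nonneg q.2
  calc |cross p q| ≤ |p.1 * q.2| + |p.2 * q.1| := by unfold cross; exact abs_sub _ _
    _ = |p.1| * |q.2| + |p.2| * |q.1| := by rw [abs_mul, abs_mul]
    _ ≤ ‖p‖ * ‖q‖ + ‖p‖ * ‖q‖ := by gcongr
    _ = 2 * ‖p‖ * ‖q‖ := by ring

/-- Integrability of the diagonal-cross integrand. -/

lemma shoelace (L1 L2 t : ℝ) (hL1 : 0 < L1) (hL2 : 0 < L2) (ht : 0 < t)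
    (ht1 : t ≤ L1 / 2) (ht2 : t ≤ L2 / 2)
    (u : ℝ × ℝ → ℝ × ℝ) (hc : ContinuousOn u (Rect L1 L2)) :
    ∫ p in Ioo 0 (L1 - t) ×ˢ Ioo 0 (L2 - t),
        cross (u (p.1 + t, p.2 + t) - u (p.1, p.2)) (u (p.1, p.2 + t) - u (p.1 + t, p.2))
      = (∫ x in Ioo (0:ℝ) (L1 - t),
            ((∫ y in (0:ℝ)..t, cross (u (x, y)) (u (x + t, y)))
              - ∫ y in (L2 - t)..L2, cross (u (x, y)) (u (x + t, y))))
        + ∫ y in Ioo (0:ℝ) (L2 - t),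
            ((∫ x in (L1 - t)..L1, cross (u (x, y)) (u (x, y + t)))
              - ∫ x in (0:ℝ)..t, cross (u (x, y)) (u (x, y + t))) := by
  have htL1 : t ≤ L1 - t := by linarith
  have htL2 : t ≤ L2 - t := by linarith
  set Eh : ℝ → ℝ → ℝ := fun x y => cross (u (x, y)) (u (x + t, y)) with hEhdef
  set Fv : ℝ → ℝ → ℝ := fun x y => cross (u (x, y)) (u (x, y + t)) with hFvdef
  set Q : Set (ℝ × ℝ) := Icc 0 (L1 - t) ×ˢ Icc 0 (L2 - t) with hQdef
  set S : Set (ℝ × ℝ) := Ioo 0 (L1 - t) ×ˢ Ioo 0 (L2 - t) with hSdef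
  have hSQ : S ⊆ Q := prod_mono Ioo_subset_Icc_self Ioo_subset_Icc_self
  have hQcomp : IsCompact Q := (isCompact_Icc).prod isCompact_Icc
  -- continuity of shifted compositions
  have hshift : ∀ a b : ℝ, 0 ≤ a → a ≤ t → 0 ≤ b → b ≤ t →
      ContinuousOn (fun p : ℝ × ℝ => u (p.1 + a, p.2 + b)) Q := by
    intro a b ha ha' hb hb'
    apply hc.comp ((continuous_fst.add continuous_const).prodMk
      (continuous_snd.add continuous_const)).continuousOn
    rintro ⟨x, y⟩ ⟨hx, hy⟩
    simp only [Rect, mem_prod, mem_Icc, Pi.add_apply] at *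
    constructor <;> constructor <;> linarith [hx.1, hx.2, hy.1, hy.2]
  have hcc : ∀ a b a' b' : ℝ, 0 ≤ a → a ≤ t → 0 ≤ b → b ≤ t → 0 ≤ a' → a' ≤ t → 0 ≤ b' → b' ≤ t →
      ContinuousOn (fun p : ℝ × ℝ => cross (u (p.1 + a, p.2 + b)) (u (p.1 + a', p.2 + b'))) Q := by
    intro a b a' b' h1 h2 h3 h4 h5 h6 h7 h8
    have H1 := hshift a b h1 h2 h3 h4
    have H2 := hshift a' b' h5 h6 h7 h8
    exact ((H1.fst.mul H2.snd).sub (H1.snd.mul H2.fst))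
  have hii : ∀ a b a' b' : ℝ, 0 ≤ a → a ≤ t → 0 ≤ b → b ≤ t → 0 ≤ a' → a' ≤ t → 0 ≤ b' → b' ≤ t →
      IntegrableOn (fun p : ℝ × ℝ => cross (u (p.1 + a, p.2 + b)) (u (p.1 + a', p.2 + b'))) S := by
    intro a b a' b' h1 h2 h3 h4 h5 h6 h7 h8
    exact ((hcc a b a' b' h1 h2 h3 h4 h5 h6 h7 h8).integrableOn_compact hQcomp).mono_set hSQ
  have h0t : (0:ℝ) ≤ t := ht.le
  have int1 : IntegrableOn (fun p : ℝ × ℝ => Eh p.1 p.2 - Eh p.1 (p.2 + t)) S := by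
    have A := hii 0 0 t 0 le_rfl h0t le_rfl h0t h0t le_rfl le_rfl h0t
    have B := hii 0 t t t le_rfl h0t h0t le_rfl h0t le_rfl h0t le_rfl
    simpa [hEhdef, add_zero, Pi.sub_def] using A.sub B
  have int2 : IntegrableOn (fun p : ℝ × ℝ => Fv (p.1 + t) p.2 - Fv p.1 p.2) S := by
    have A := hii t 0 t t h0t le_rfl le_rfl h0t h0t le_rfl h0t le_rfl
    have B := hii 0 0 0 t le_rfl h0t le_rfl h0t le_rfl h0t h0t le_rfl
    simpa [hFvdef, add_zero, Pi.sub_def] using A.sub B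
  -- pointwise shoelace expansion
  have hpt : ∀ p : ℝ × ℝ,
      cross (u (p.1 + t, p.2 + t) - u (p.1, p.2)) (u (p.1, p.2 + t) - u (p.1 + t, p.2))
        = (Eh p.1 p.2 - Eh p.1 (p.2 + t)) + (Fv (p.1 + t) p.2 - Fv p.1 p.2) := by
    intro p
    simp only [hEhdef, hFvdef, cross, Prod.fst_sub, Prod.snd_sub]
    ring
  rw [show (fun p : ℝ × ℝ =>
      cross (u (p.1 + t, p.2 + t) - u (p.1, p.2)) (u (p.1, p.2 + t) - u (p.1 + t, p.2)))
    = fun p : ℝ × ℝ => (Eh p.1 p.2 - Eh p.1 (p.2 + t)) + (Fv (p.1 + t) p.2 - Fv p.1 p.2)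
    from funext hpt]
  rw [integral_add int1 int2]
  congr 1
  -- part E
  · rw [Measure.volume_eq_prod]
    rw [setIntegral_prod _ (by rw [← Measure.volume_eq_prod]; exact int1)]
    apply setIntegral_congr_fun measurableSet_Ioo
    intro x hx
    simp only [mem_Ioo] at hx
    have hxI : x ∈ Icc 0 (L1 - t) := ⟨hx.1.le, hx.2.le⟩
    -- 1D continuity in y
    have hyc : ContinuousOn (fun y => Eh x y) (Icc 0 L2) := by
      have h1 : ContinuousOn (fun y : ℝ => u (x, y)) (Icc 0 L2) := by
        apply hc.comp (Continuous.continuousOn (Continuous.prodMk_right _))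
        intro y hy
        simp only [Rect, mem_prod, mem_Icc] at hy ⊢
        refine ⟨⟨?_, ?_⟩, hy⟩ <;> linarith [hx.1, hx.2]
      have h2 : ContinuousOn (fun y : ℝ => u (x + t, y)) (Icc 0 L2) := by
        apply hc.comp (Continuous.continuousOn (Continuous.prodMk_right _))
        intro y hy
        simp only [Rect, mem_prod, mem_Icc] at hy ⊢
        refine ⟨⟨?_, ?_⟩, hy⟩ <;> linarith [hx.1, hx.2]
      exact (h1.fst.mul h2.snd).sub (h1.snd.mul h2.fst)
    have hintY : IntervalIntegrable (fun y => Eh x y) volume 0 L2 := by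
      apply ContinuousOn.intervalIntegrable
      rwa [uIcc_of_le (by linarith)]
    have m1 : IntervalIntegrable (fun y => Eh x y) volume 0 t :=
      hintY.mono_set (by
        rw [uIcc_of_le h0t, uIcc_of_le (show (0:ℝ) ≤ L2 by linarith)]
        exact Icc_subset_Icc le_rfl (by linarith))
    have m2 : IntervalIntegrable (fun y => Eh x y) volume t (L2 - t) :=
      hintY.mono_set (by
        rw [uIcc_of_le htL2, uIcc_of_le (show (0:ℝ) ≤ L2 by linarith)]
        exact Icc_subset_Icc h0t (by linarith))
    have m3 : IntervalIntegrable (fun y => Eh x y) volume (L2 - t) L2 :=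
      hintY.mono_set (by
        rw [uIcc_of_le (show L2 - t ≤ L2 by linarith), uIcc_of_le (show (0:ℝ) ≤ L2 by linarith)]
        exact Icc_subset_Icc (by linarith) le_rfl)
    have m12 : IntervalIntegrable (fun y => Eh x y) volume 0 (L2 - t) :=
      m1.trans m2
    have mshift : IntervalIntegrable (fun y => Eh x (y + t)) volume 0 (L2 - t) := by
      have := (m2.trans m3)  -- integrable on t..L2
      have h := IntervalIntegrable.comp_add_right this t
      simpa using h
    calc ∫ y in Ioo 0 (L2 - t), (Eh x y - Eh x (y + t))
        = ∫ y in (0:ℝ)..(L2 - t), (Eh x y - Eh x (y + t)) := by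
          rw [intervalIntegral.integral_of_le (by linarith), integral_Ioc_eq_integral_Ioo]
      _ = (∫ y in (0:ℝ)..(L2 - t), Eh x y) - ∫ y in (0:ℝ)..(L2 - t), Eh x (y + t) :=
          intervalIntegral.integral_sub m12 mshift
      _ = (∫ y in (0:ℝ)..(L2 - t), Eh x y) - ∫ y in t..L2, Eh x y := by
          rw [intervalIntegral.integral_comp_add_right (fun y => Eh x y) t]
          norm_num
      _ = ((∫ y in (0:ℝ)..t, Eh x y) + ∫ y in t..(L2 - t), Eh x y)
            - ((∫ y in t..(L2 - t), Eh x y) + ∫ y in (L2 - t)..L2, Eh x y) := by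
          rw [intervalIntegral.integral_add_adjacent_intervals m1 m2,
            intervalIntegral.integral_add_adjacent_intervals m2 m3]
      _ = (∫ y in (0:ℝ)..t, Eh x y) - ∫ y in (L2 - t)..L2, Eh x y := by ring
  -- part F
  · rw [Measure.volume_eq_prod]
    rw [setIntegral_prod_symm'' _ (by rw [← Measure.volume_eq_prod]; exact int2)]
    apply setIntegral_congr_fun measurableSet_Ioo
    intro y hy
    simp only [mem_Ioo] at hy
    have hxc : ContinuousOn (fun x => Fv x y) (Icc 0 L1) := by
      have h1 : ContinuousOn (fun x : ℝ => u (x, y)) (Icc 0 L1) := by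
        apply hc.comp (Continuous.continuousOn (continuous_id.prodMk continuous_const))
        intro x hxx
        simp only [Rect, mem_prod, mem_Icc, id] at hxx ⊢
        refine ⟨hxx, ?_, ?_⟩ <;> linarith [hy.1, hy.2]
      have h2 : ContinuousOn (fun x : ℝ => u (x, y + t)) (Icc 0 L1) := by
        apply hc.comp (Continuous.continuousOn (continuous_id.prodMk continuous_const))
        intro x hxx
        simp only [Rect, mem_prod, mem_Icc, id] at hxx ⊢
        refine ⟨hxx, ?_, ?_⟩ <;> linarith [hy.1, hy.2]
      exact (h1.fst.mul h2.snd).sub (h1.snd.mul h2.fst)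
    have hintX : IntervalIntegrable (fun x => Fv x y) volume 0 L1 := by
      apply ContinuousOn.intervalIntegrable
      rwa [uIcc_of_le (by linarith)]
    have m1 : IntervalIntegrable (fun x => Fv x y) volume 0 t :=
      hintX.mono_set (by
        rw [uIcc_of_le h0t, uIcc_of_le (show (0:ℝ) ≤ L1 by linarith)]
        exact Icc_subset_Icc le_rfl (by linarith))
    have m2 : IntervalIntegrable (fun x => Fv x y) volume t (L1 - t) :=
      hintX.mono_set (by
        rw [uIcc_of_le htL1, uIcc_of_le (show (0:ℝ) ≤ L1 by linarith)]
        exact Icc_subset_Icc h0t (by linarith))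
    have m3 : IntervalIntegrable (fun x => Fv x y) volume (L1 - t) L1 :=
      hintX.mono_set (by
        rw [uIcc_of_le (show L1 - t ≤ L1 by linarith), uIcc_of_le (show (0:ℝ) ≤ L1 by linarith)]
        exact Icc_subset_Icc (by linarith) le_rfl)
    have m12 : IntervalIntegrable (fun x => Fv x y) volume 0 (L1 - t) := m1.trans m2
    have mshift : IntervalIntegrable (fun x => Fv (x + t) y) volume 0 (L1 - t) := by
      have h := IntervalIntegrable.comp_add_right (m2.trans m3) t
      simpa using h
    calc ∫ x in Ioo 0 (L1 - t), (Fv (x + t) y - Fv x y)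
        = ∫ x in (0:ℝ)..(L1 - t), (Fv (x + t) y - Fv x y) := by
          rw [intervalIntegral.integral_of_le (by linarith), integral_Ioc_eq_integral_Ioo]
      _ = (∫ x in (0:ℝ)..(L1 - t), Fv (x + t) y) - ∫ x in (0:ℝ)..(L1 - t), Fv x y :=
          intervalIntegral.integral_sub mshift m12
      _ = (∫ x in t..L1, Fv x y) - ∫ x in (0:ℝ)..(L1 - t), Fv x y := by
          rw [intervalIntegral.integral_comp_add_right (fun x => Fv x y) t]
          norm_num
      _ = ((∫ x in t..(L1 - t), Fv x y) + ∫ x in (L1 - t)..L1, Fv x y)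
            - ((∫ x in (0:ℝ)..t, Fv x y) + ∫ x in t..(L1 - t), Fv x y) := by
          rw [intervalIntegral.integral_add_adjacent_intervals m2 m3,
            intervalIntegral.integral_add_adjacent_intervals m1 m2]
      _ = (∫ x in (L1 - t)..L1, Fv x y) - ∫ x in (0:ℝ)..t, Fv x y := by ring

lemma intP (L1 L2 t : ℝ) (ht0 : 0 < t) (ht1 : t ≤ L1 / 2) (ht2 : t ≤ L2 / 2)
    (u : ℝ × ℝ → ℝ × ℝ) (hc : ContinuousOn u (Rect L1 L2)) :
    IntegrableOn (fun p : ℝ × ℝ =>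
        cross (u (p.1 + t, p.2 + t) - u (p.1, p.2)) (u (p.1, p.2 + t) - u (p.1 + t, p.2)))
      (Ioo 0 (L1 - t) ×ˢ Ioo 0 (L2 - t)) := by
  have hQcomp : IsCompact (Icc (0:ℝ) (L1 - t) ×ˢ Icc (0:ℝ) (L2 - t)) :=
    isCompact_Icc.prod isCompact_Icc
  have hshift : ∀ a b : ℝ, 0 ≤ a → a ≤ t → 0 ≤ b → b ≤ t →
      ContinuousOn (fun p : ℝ × ℝ => u (p.1 + a, p.2 + b))
        (Icc (0:ℝ) (L1 - t) ×ˢ Icc (0:ℝ) (L2 - t)) := by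
    intro a b ha ha' hb hb'
    apply hc.comp ((continuous_fst.add continuous_const).prodMk
      (continuous_snd.add continuous_const)).continuousOn
    rintro ⟨x, y⟩ ⟨hx, hy⟩
    simp only [Rect, mem_prod, mem_Icc, Pi.add_apply] at *
    constructor <;> constructor <;> linarith [hx.1, hx.2, hy.1, hy.2]
  have h1 := hshift t t ht0.le le_rfl ht0.le le_rfl
  have h2 := hshift 0 0 le_rfl ht0.le le_rfl ht0.le
  have h3 := hshift 0 t le_rfl ht0.le ht0.le le_rfl
  have h4 := hshift t 0 ht0.le le_rfl le_rfl ht0.le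
  simp only [add_zero] at h2 h3 h4
  have hcont : ContinuousOn (fun p : ℝ × ℝ =>
      cross (u (p.1 + t, p.2 + t) - u (p.1, p.2)) (u (p.1, p.2 + t) - u (p.1 + t, p.2)))
      (Icc (0:ℝ) (L1 - t) ×ˢ Icc (0:ℝ) (L2 - t)) := by
    have A := h1.sub h2
    have B := h3.sub h4
    exact (A.fst.mul B.snd).sub (A.snd.mul B.fst)
  exact (hcont.integrableOn_compact hQcomp).mono_set
    (prod_mono Ioo_subset_Icc_self Ioo_subset_Icc_self)

lemma key (L1 L2 : ℝ) (hL1 : 0 < L1) (hL2 : 0 < L2) (u : ℝ × ℝ → ℝ × ℝ)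
    (hu : ContDiffOn ℝ 1 u (Rect L1 L2))
    (hS : ∀ x ∈ Icc (0:ℝ) L1, ∀ x' ∈ Icc (0:ℝ) L1, cross (u (x, 0)) (u (x', 0)) = 0)
    (hN : ∀ x ∈ Icc (0:ℝ) L1, ∀ x' ∈ Icc (0:ℝ) L1, cross (u (x, L2)) (u (x', L2)) = 0)
    (hW : ∀ y ∈ Icc (0:ℝ) L2, ∀ y' ∈ Icc (0:ℝ) L2, cross (u (0, y)) (u (0, y')) = 0)
    (hE : ∀ y ∈ Icc (0:ℝ) L2, ∀ y' ∈ Icc (0:ℝ) L2, cross (u (L1, y)) (u (L1, y')) = 0) :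
    ∫ p in Om L1 L2, cross (fderivWithin ℝ u (Rect L1 L2) p (1, 0))
        (fderivWithin ℝ u (Rect L1 L2) p (0, 1)) = 0 := by
  set R := Rect L1 L2 with hRdef
  set Du : (ℝ × ℝ) → (ℝ × ℝ) →L[ℝ] (ℝ × ℝ) := fun p => fderivWithin ℝ u R p with hDudef
  set G : (ℝ × ℝ) → ℝ := fun p => cross (Du p (1, 0)) (Du p (0, 1)) with hGdef
  show ∫ p in Om L1 L2, G p = 0
  have hRconv : Convex ℝ R := (convex_Icc _ _).prod (convex_Icc _ _)
  have hRcomp : IsCompact R := isCompact_Icc.prod isCompact_Icc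
  have hRuniq : UniqueDiffOn ℝ R := (uniqueDiffOn_Icc hL1).prod (uniqueDiffOn_Icc hL2)
  have hOmR : Om L1 L2 ⊆ R := prod_mono Ioo_subset_Icc_self Ioo_subset_Icc_self
  have hd : DifferentiableOn ℝ u R := hu.differentiableOn one_ne_zero
  have hDuc : ContinuousOn Du R := hu.continuousOn_fderivWithin hRuniq le_rfl
  have hucont : ContinuousOn u R := hu.continuousOn
  -- bounds
  obtain ⟨K0, hK0⟩ := hRcomp.exists_bound_of_continuousOn hDuc
  set K : ℝ := max K0 1 with hKdef
  have hK1 : (1:ℝ) ≤ K := le_max_right _ _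
  have hK0' : (0:ℝ) ≤ K := le_trans zero_le_one hK1
  have hK : ∀ p ∈ R, ‖Du p‖ ≤ K := fun p hp => le_trans (hK0 p hp) (le_max_left _ _)
  obtain ⟨M0, hM0⟩ := hRcomp.exists_bound_of_continuousOn hucont
  set M : ℝ := max M0 0 with hMdef
  have hM0' : (0:ℝ) ≤ M := le_max_right _ _
  have hM : ∀ p ∈ R, ‖u p‖ ≤ M := fun p hp => le_trans (hM0 p hp) (le_max_left _ _)
  have hLip : ∀ p ∈ R, ∀ q ∈ R, ‖u q - u p‖ ≤ K * ‖q - p‖ := fun p hp q hq =>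
    hRconv.norm_image_sub_le_of_norm_fderivWithin_le hd hK hp hq
  -- norm facts
  have hn10 : ‖((1:ℝ), (0:ℝ))‖ = 1 := by
    simp [Prod.norm_def, Real.norm_eq_abs]
  have hn01 : ‖((0:ℝ), (1:ℝ))‖ = 1 := by
    simp [Prod.norm_def, Real.norm_eq_abs]
  have hDxK : ∀ p ∈ R, ‖Du p (1, 0)‖ ≤ K := by
    intro p hp
    calc ‖Du p (1, 0)‖ ≤ ‖Du p‖ * ‖((1:ℝ), (0:ℝ))‖ := (Du p).le_opNorm _
      _ = ‖Du p‖ := by rw [hn10, mul_one]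
      _ ≤ K := hK p hp
  have hDyK : ∀ p ∈ R, ‖Du p (0, 1)‖ ≤ K := by
    intro p hp
    calc ‖Du p (0, 1)‖ ≤ ‖Du p‖ * ‖((0:ℝ), (1:ℝ))‖ := (Du p).le_opNorm _
      _ = ‖Du p‖ := by rw [hn01, mul_one]
      _ ≤ K := hK p hp
  have hGbound : ∀ p ∈ R, |G p| ≤ 2 * K ^ 2 := by
    intro p hp
    calc |G p| ≤ 2 * ‖Du p (1, 0)‖ * ‖Du p (0, 1)‖ := abs_cross_le _ _
      _ ≤ 2 * K * K := by
          gcongr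
          exacts [hDxK p hp, hDyK p hp]
      _ = 2 * K ^ 2 := by ring
  have hGcont : ContinuousOn G R := by
    have hA : ContinuousOn (fun p => Du p (1, 0)) R := hDuc.clm_apply continuousOn_const
    have hB : ContinuousOn (fun p => Du p (0, 1)) R := hDuc.clm_apply continuousOn_const
    exact (hA.fst.mul hB.snd).sub (hA.snd.mul hB.fst)
  have hGint : IntegrableOn G (Om L1 L2) :=
    (hGcont.integrableOn_compact hRcomp).mono_set hOmR
  -- reduce to: ∀ ε > 0, |∫ G| ≤ ε
  suffices habs : ∀ ε : ℝ, 0 < ε → |∫ p in Om L1 L2, G p| ≤ ε by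
    by_contra hne
    have hpos : 0 < |∫ p in Om L1 L2, G p| := abs_pos.mpr hne
    have := habs (|∫ p in Om L1 L2, G p| / 2) (by linarith)
    linarith
  intro ε hε
  -- constants
  set D0 : ℝ := (12 * K + 4) * (L1 * L2) / 2 + (2 * K ^ 2 + 6 * M) * (L1 + L2)
      + 4 * K ^ 2 * (L1 + L2) + 1 with hD0def
  have hD0pos : 0 < D0 := by positivity
  set ε₁ : ℝ := min 1 (ε / D0) with hε₁def
  have hε₁pos : 0 < ε₁ := lt_min one_pos (div_pos hε hD0pos)
  have hε₁le1 : ε₁ ≤ 1 := min_le_left _ _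
  have hε₁D : ε₁ * D0 ≤ ε := by
    have h := min_le_right 1 (ε / D0)
    calc ε₁ * D0 ≤ (ε / D0) * D0 := by gcongr
      _ = ε := by field_simp
  -- modulus of continuity for Du
  have hUC := hRcomp.uniformContinuousOn_of_continuous hDuc
  rw [Metric.uniformContinuousOn_iff] at hUC
  obtain ⟨δ, hδpos, hδ⟩ := hUC ε₁ hε₁pos
  -- Taylor estimate
  have hTay : ∀ p ∈ R, ∀ q ∈ R, dist q p < δ →
      ‖u q - u p - Du p (q - p)‖ ≤ ε₁ * ‖q - p‖ := by
    intro p hp q hq hdist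
    have hconv' : Convex ℝ (R ∩ Metric.ball p δ) := hRconv.inter (convex_ball p δ)
    have hder : ∀ z ∈ R ∩ Metric.ball p δ, HasFDerivWithinAt u (Du z) (R ∩ Metric.ball p δ) z :=
      fun z hz => ((hd z hz.1).hasFDerivWithinAt).mono inter_subset_left
    have hbound : ∀ z ∈ R ∩ Metric.ball p δ, ‖Du z - Du p‖ ≤ ε₁ := by
      intro z hz
      have h := hδ z hz.1 p hp (Metric.mem_ball.mp hz.2)
      rw [dist_eq_norm] at h
      exact h.le
    exact hconv'.norm_image_sub_le_of_norm_hasFDerivWithin_le' hder hbound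
      ⟨hp, Metric.mem_ball_self hδpos⟩ ⟨hq, Metric.mem_ball.mpr hdist⟩
  -- choice of t
  set t : ℝ := min (min (δ / 2) ε₁) (min (L1 / 2) (L2 / 2)) with htdef
  have ht0 : 0 < t := by
    apply lt_min (lt_min (by linarith) hε₁pos) (lt_min (by linarith) (by linarith))
  have htδ : t < δ := lt_of_le_of_lt (le_trans (min_le_left _ _) (min_le_left _ _)) (by linarith)
  have htε : t ≤ ε₁ := le_trans (min_le_left _ _) (min_le_right _ _)
  have ht1 : t ≤ L1 / 2 := le_trans (min_le_right _ _) (min_le_left _ _)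
  have ht2 : t ≤ L2 / 2 := le_trans (min_le_right _ _) (min_le_right _ _)
  -- more norm facts
  have hntt : ‖((t, t) : ℝ × ℝ)‖ = t := by
    simp [Prod.norm_def, Real.norm_eq_abs, abs_of_pos ht0]
  have hnt0 : ‖((t, 0) : ℝ × ℝ)‖ = t := by
    simp [Prod.norm_def, Real.norm_eq_abs, abs_of_pos ht0, ht0.le]
  have hn0t : ‖((0, t) : ℝ × ℝ)‖ = t := by
    simp [Prod.norm_def, Real.norm_eq_abs, abs_of_pos ht0, ht0.le]
  -- strip estimate
  set B : ℝ := t * (2 * K ^ 2 * t + 6 * M * ε₁) with hBdef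
  have hBnn : 0 ≤ B := by positivity
  have hstrip : ∀ q0 q1 p0 p1 : ℝ × ℝ, q0 ∈ R → q1 ∈ R → p0 ∈ R → p1 ∈ R →
      q1 - q0 = p1 - p0 → cross (u p0) (u p1) = 0 → ‖q1 - q0‖ ≤ t → ‖q0 - p0‖ ≤ t →
      |cross (u q0) (u q1)| ≤ B := by
    intro q0 q1 p0 p1 hq0 hq1 hp0 hp1 hvec hzero hv hqp
    have e1 : cross (u q0) (u q1)
        = cross (u q0 - u p0) (u q1 - u q0)
          + cross (u p0) ((u q1 - u q0) - (u p1 - u p0)) + cross (u p0) (u p1) := by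
      simp only [cross, Prod.fst_sub, Prod.snd_sub]; ring
    rw [hzero, add_zero] at e1
    have h1 : ‖u q0 - u p0‖ ≤ K * t := by
      calc ‖u q0 - u p0‖ ≤ K * ‖q0 - p0‖ := hLip p0 hp0 q0 hq0
        _ ≤ K * t := by gcongr
    have h2 : ‖u q1 - u q0‖ ≤ K * t := by
      calc ‖u q1 - u q0‖ ≤ K * ‖q1 - q0‖ := hLip q0 hq0 q1 hq1
        _ ≤ K * t := by gcongr
    have hT1 : ‖u q1 - u q0 - Du q0 (q1 - q0)‖ ≤ ε₁ * t := by
      have := hTay q0 hq0 q1 hq1 (by rw [dist_eq_norm]; exact lt_of_le_of_lt hv htδ)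
      calc ‖u q1 - u q0 - Du q0 (q1 - q0)‖ ≤ ε₁ * ‖q1 - q0‖ := this
        _ ≤ ε₁ * t := by gcongr
    have hT2 : ‖u p1 - u p0 - Du p0 (p1 - p0)‖ ≤ ε₁ * t := by
      have hv' : ‖p1 - p0‖ ≤ t := by rw [← hvec]; exact hv
      have := hTay p0 hp0 p1 hp1 (by rw [dist_eq_norm]; exact lt_of_le_of_lt hv' htδ)
      calc ‖u p1 - u p0 - Du p0 (p1 - p0)‖ ≤ ε₁ * ‖p1 - p0‖ := this
        _ ≤ ε₁ * t := by gcongr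
    have hT3 : ‖Du q0 (q1 - q0) - Du p0 (p1 - p0)‖ ≤ ε₁ * t := by
      rw [← hvec]
      have : Du q0 (q1 - q0) - Du p0 (q1 - q0) = (Du q0 - Du p0) (q1 - q0) := by
        simp [ContinuousLinearMap.sub_apply]
      rw [this]
      have hdq : ‖Du q0 - Du p0‖ ≤ ε₁ := by
        have h := hδ q0 hq0 p0 hp0 (by rw [dist_eq_norm]; exact lt_of_le_of_lt hqp htδ)
        rw [dist_eq_norm] at h
        exact h.le
      calc ‖(Du q0 - Du p0) (q1 - q0)‖ ≤ ‖Du q0 - Du p0‖ * ‖q1 - q0‖ :=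
            (Du q0 - Du p0).le_opNorm _
        _ ≤ ε₁ * t := by gcongr
    have h3 : ‖(u q1 - u q0) - (u p1 - u p0)‖ ≤ 3 * (ε₁ * t) := by
      have hid : (u q1 - u q0) - (u p1 - u p0)
          = (u q1 - u q0 - Du q0 (q1 - q0)) - (u p1 - u p0 - Du p0 (p1 - p0))
            + (Du q0 (q1 - q0) - Du p0 (p1 - p0)) := by abel
      rw [hid]
      calc ‖(u q1 - u q0 - Du q0 (q1 - q0)) - (u p1 - u p0 - Du p0 (p1 - p0))
            + (Du q0 (q1 - q0) - Du p0 (p1 - p0))‖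
          ≤ ‖(u q1 - u q0 - Du q0 (q1 - q0)) - (u p1 - u p0 - Du p0 (p1 - p0))‖
            + ‖Du q0 (q1 - q0) - Du p0 (p1 - p0)‖ := norm_add_le _ _
        _ ≤ (‖u q1 - u q0 - Du q0 (q1 - q0)‖ + ‖u p1 - u p0 - Du p0 (p1 - p0)‖)
            + ‖Du q0 (q1 - q0) - Du p0 (p1 - p0)‖ :=
            add_le_add (norm_sub_le _ _) le_rfl
        _ ≤ (ε₁ * t + ε₁ * t) + ε₁ * t := by gcongr
        _ = 3 * (ε₁ * t) := by ring
    have c1 : |cross (u q0 - u p0) (u q1 - u q0)| ≤ 2 * (K * t) * (K * t) := by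
      refine le_trans (abs_cross_le _ _) ?_
      have n1 := norm_nonneg (u q0 - u p0)
      have n2 := norm_nonneg (u q1 - u q0)
      have := mul_le_mul h1 h2 n2 (mul_nonneg hK0' ht0.le)
      linarith
    have c2 : |cross (u p0) ((u q1 - u q0) - (u p1 - u p0))| ≤ 2 * M * (3 * (ε₁ * t)) := by
      refine le_trans (abs_cross_le _ _) ?_
      have n1 := norm_nonneg (u p0)
      have n2 := norm_nonneg ((u q1 - u q0) - (u p1 - u p0))
      have := mul_le_mul (hM p0 hp0) h3 n2 hM0'
      linarith
    rw [e1]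
    calc |cross (u q0 - u p0) (u q1 - u q0) + cross (u p0) ((u q1 - u q0) - (u p1 - u p0))|
        ≤ |cross (u q0 - u p0) (u q1 - u q0)|
          + |cross (u p0) ((u q1 - u q0) - (u p1 - u p0))| := abs_add_le _ _
      _ ≤ 2 * (K * t) * (K * t) + 2 * M * (3 * (ε₁ * t)) := add_le_add c1 c2
      _ = B := by rw [hBdef]; ring
  -- pointwise second-order estimate
  set S : Set (ℝ × ℝ) := Ioo 0 (L1 - t) ×ˢ Ioo 0 (L2 - t) with hSdef
  have hSOm : S ⊆ Om L1 L2 :=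
    prod_mono (Ioo_subset_Ioo le_rfl (by linarith)) (Ioo_subset_Ioo le_rfl (by linarith))
  have hSR : S ⊆ R := subset_trans hSOm hOmR
  have hmemR : ∀ a b : ℝ, 0 ≤ a → a ≤ L1 → 0 ≤ b → b ≤ L2 → ((a, b) : ℝ × ℝ) ∈ R := by
    intro a b h1 h2 h3 h4
    simp only [hRdef, Rect, mem_prod, mem_Icc]
    exact ⟨⟨h1, h2⟩, ⟨h3, h4⟩⟩
  set P : (ℝ × ℝ) → ℝ := fun p =>
    cross (u (p.1 + t, p.2 + t) - u (p.1, p.2)) (u (p.1, p.2 + t) - u (p.1 + t, p.2)) with hPdef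
  have hmul : ∀ a b c d : ℝ, 0 ≤ a → 0 ≤ b → a ≤ c → b ≤ d → 2 * a * b ≤ 2 * c * d := by
    intro a b c d ha hb hac hbd
    have := mul_le_mul hac hbd hb (le_trans ha hac)
    linarith
  have hptws : ∀ p ∈ S, |t ^ 2 * (2 * G p) - P p| ≤ (12 * K + 4) * ε₁ * t ^ 2 := by
    intro p hpS
    have hpx : p.1 ∈ Ioo (0:ℝ) (L1 - t) := hpS.1
    have hpy : p.2 ∈ Ioo (0:ℝ) (L2 - t) := hpS.2
    rw [mem_Ioo] at hpx hpy
    have hpR : p ∈ R := hSR hpS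
    have hq1R : ((p.1 + t, p.2 + t) : ℝ × ℝ) ∈ R := by
      apply hmemR <;> linarith [hpx.1, hpx.2, hpy.1, hpy.2]
    have hqxR : ((p.1 + t, p.2) : ℝ × ℝ) ∈ R := by
      apply hmemR <;> linarith [hpx.1, hpx.2, hpy.1, hpy.2]
    have hqyR : ((p.1, p.2 + t) : ℝ × ℝ) ∈ R := by
      apply hmemR <;> linarith [hpx.1, hpx.2, hpy.1, hpy.2]
    have hd1 : ((p.1 + t, p.2 + t) : ℝ × ℝ) - p = (t, t) := by
      simp [Prod.ext_iff]
    have hdx : ((p.1 + t, p.2) : ℝ × ℝ) - p = (t, 0) := by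
      simp [Prod.ext_iff]
    have hdy : ((p.1, p.2 + t) : ℝ × ℝ) - p = (0, t) := by
      simp [Prod.ext_iff]
    set Dx := Du p (1, 0) with hDx
    set Dy := Du p (0, 1) with hDy
    have hsm : ∀ a b : ℝ, Du p ((a, b) : ℝ × ℝ) = a • Dx + b • Dy := by
      intro a b
      have hab : ((a, b) : ℝ × ℝ) = a • ((1:ℝ), (0:ℝ)) + b • ((0:ℝ), (1:ℝ)) := by
        simp [Prod.ext_iff]
      rw [hab, map_add, (Du p).map_smul, (Du p).map_smul]
    have hvtt : Du p ((t, t) : ℝ × ℝ) = t • Dx + t • Dy := hsm t t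
    have hvt0 : Du p ((t, 0) : ℝ × ℝ) = t • Dx := by rw [hsm]; simp
    have hv0t : Du p ((0, t) : ℝ × ℝ) = t • Dy := by rw [hsm]; simp
    set e1 := u (p.1 + t, p.2 + t) - u p - Du p ((t, t) : ℝ × ℝ) with he1def
    set ex := u (p.1 + t, p.2) - u p - Du p ((t, 0) : ℝ × ℝ) with hexdef
    set ey := u (p.1, p.2 + t) - u p - Du p ((0, t) : ℝ × ℝ) with heydef
    have he1n : ‖e1‖ ≤ ε₁ * t := by
      have h := hTay p hpR _ hq1R (by rw [dist_eq_norm, hd1, hntt]; exact htδ)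
      rw [hd1, hntt] at h
      exact h
    have hexn : ‖ex‖ ≤ ε₁ * t := by
      have h := hTay p hpR _ hqxR (by rw [dist_eq_norm, hdx, hnt0]; exact htδ)
      rw [hdx, hnt0] at h
      exact h
    have heyn : ‖ey‖ ≤ ε₁ * t := by
      have h := hTay p hpR _ hqyR (by rw [dist_eq_norm, hdy, hn0t]; exact htδ)
      rw [hdy, hn0t] at h
      exact h
    have hA : u (p.1 + t, p.2 + t) - u (p.1, p.2) = (t • Dx + t • Dy) + e1 := by
      rw [show ((p.1, p.2) : ℝ × ℝ) = p from rfl, he1def, hvtt]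
      abel
    have hB : u (p.1, p.2 + t) - u (p.1 + t, p.2) = (t • Dy - t • Dx) + (ey - ex) := by
      rw [heydef, hexdef, hvt0, hv0t]
      abel
    have hGp : G p = cross Dx Dy := rfl
    have hPp : P p = cross ((t • Dx + t • Dy) + e1) ((t • Dy - t • Dx) + (ey - ex)) := by
      rw [hPdef]
      simp only []
      rw [hA, hB]
    have hmainterm : cross (t • Dx + t • Dy) (t • Dy - t • Dx) = t ^ 2 * (2 * cross Dx Dy) := by
      simp only [cross, Prod.fst_add, Prod.snd_add, Prod.fst_sub, Prod.snd_sub,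
        Prod.smul_fst, Prod.smul_snd, smul_eq_mul]
      ring
    have hexpand : cross ((t • Dx + t • Dy) + e1) ((t • Dy - t • Dx) + (ey - ex))
        = cross (t • Dx + t • Dy) (t • Dy - t • Dx) + cross e1 (t • Dy - t • Dx)
          + cross (t • Dx + t • Dy) (ey - ex) + cross e1 (ey - ex) := by
      simp only [cross, Prod.fst_add, Prod.snd_add]
      ring
    rw [hGp, hPp, hexpand, hmainterm]
    have hred : t ^ 2 * (2 * cross Dx Dy)
        - (t ^ 2 * (2 * cross Dx Dy) + cross e1 (t • Dy - t • Dx)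
          + cross (t • Dx + t • Dy) (ey - ex) + cross e1 (ey - ex))
        = -(cross e1 (t • Dy - t • Dx) + cross (t • Dx + t • Dy) (ey - ex)
            + cross e1 (ey - ex)) := by ring
    rw [hred, abs_neg]
    have hDxn : ‖Dx‖ ≤ K := hDxK p hpR
    have hDyn : ‖Dy‖ ≤ K := hDyK p hpR
    have hsmn : ∀ v : ℝ × ℝ, ‖v‖ ≤ K → ‖t • v‖ ≤ K * t := by
      intro v hv
      rw [norm_smul, Real.norm_eq_abs, abs_of_pos ht0]
      rw [mul_comm]
      exact mul_le_mul_of_nonneg_right hv ht0.le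
    have hAn : ‖t • Dx + t • Dy‖ ≤ 2 * (K * t) := by
      calc ‖t • Dx + t • Dy‖ ≤ ‖t • Dx‖ + ‖t • Dy‖ := norm_add_le _ _
        _ ≤ K * t + K * t := add_le_add (hsmn _ hDxn) (hsmn _ hDyn)
        _ = 2 * (K * t) := by ring
    have hBn : ‖t • Dy - t • Dx‖ ≤ 2 * (K * t) := by
      calc ‖t • Dy - t • Dx‖ ≤ ‖t • Dy‖ + ‖t • Dx‖ := norm_sub_le _ _
        _ ≤ K * t + K * t := add_le_add (hsmn _ hDyn) (hsmn _ hDxn)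
        _ = 2 * (K * t) := by ring
    have he2n : ‖ey - ex‖ ≤ 2 * (ε₁ * t) := by
      calc ‖ey - ex‖ ≤ ‖ey‖ + ‖ex‖ := norm_sub_le _ _
        _ ≤ ε₁ * t + ε₁ * t := add_le_add heyn hexn
        _ = 2 * (ε₁ * t) := by ring
    have b1 : |cross e1 (t • Dy - t • Dx)| ≤ 2 * (ε₁ * t) * (2 * (K * t)) :=
      le_trans (abs_cross_le _ _) (hmul _ _ _ _ (norm_nonneg _) (norm_nonneg _) he1n hBn)
    have b2 : |cross (t • Dx + t • Dy) (ey - ex)| ≤ 2 * (2 * (K * t)) * (2 * (ε₁ * t)) :=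
      le_trans (abs_cross_le _ _) (hmul _ _ _ _ (norm_nonneg _) (norm_nonneg _) hAn he2n)
    have b3 : |cross e1 (ey - ex)| ≤ 2 * (ε₁ * t) * (2 * (ε₁ * t)) :=
      le_trans (abs_cross_le _ _) (hmul _ _ _ _ (norm_nonneg _) (norm_nonneg _) he1n he2n)
    have hsq : ε₁ * ε₁ ≤ ε₁ := mul_le_of_le_one_left hε₁pos.le hε₁le1
    calc |cross e1 (t • Dy - t • Dx) + cross (t • Dx + t • Dy) (ey - ex) + cross e1 (ey - ex)|
        ≤ |cross e1 (t • Dy - t • Dx) + cross (t • Dx + t • Dy) (ey - ex)|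
          + |cross e1 (ey - ex)| := abs_add_le _ _
      _ ≤ (|cross e1 (t • Dy - t • Dx)| + |cross (t • Dx + t • Dy) (ey - ex)|)
          + |cross e1 (ey - ex)| := add_le_add (abs_add_le _ _) le_rfl
      _ ≤ (2 * (ε₁ * t) * (2 * (K * t)) + 2 * (2 * (K * t)) * (2 * (ε₁ * t)))
          + 2 * (ε₁ * t) * (2 * (ε₁ * t)) := by
          exact add_le_add (add_le_add b1 b2) b3
      _ = 12 * K * ε₁ * t ^ 2 + 4 * (ε₁ * ε₁) * t ^ 2 := by ring
      _ ≤ 12 * K * ε₁ * t ^ 2 + 4 * ε₁ * t ^ 2 := by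
          have h := mul_le_mul_of_nonneg_right hsq (sq_nonneg t)
          linarith
      _ = (12 * K + 4) * ε₁ * t ^ 2 := by ring
  -- strip pointwise bounds from the boundary conditions
  have hEhS : ∀ x ∈ Ioo (0:ℝ) (L1 - t), ∀ y ∈ Set.uIoc (0:ℝ) t, |cross (u (x, y)) (u (x + t, y))| ≤ B := by
    intro x hx y hy
    rw [mem_Ioo] at hx
    rw [Set.uIoc_of_le ht0.le, mem_Ioc] at hy
    have h1 : ((x, y) : ℝ × ℝ) ∈ R := hmemR _ _ (by linarith) (by linarith) (by linarith) (by linarith)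
    have h2 : ((x + t, y) : ℝ × ℝ) ∈ R := hmemR _ _ (by linarith) (by linarith) (by linarith) (by linarith)
    have h3 : ((x, 0) : ℝ × ℝ) ∈ R := hmemR _ _ (by linarith) (by linarith) le_rfl (by linarith)
    have h4 : ((x + t, 0) : ℝ × ℝ) ∈ R := hmemR _ _ (by linarith) (by linarith) le_rfl (by linarith)
    apply hstrip _ _ _ _ h1 h2 h3 h4
    · simp [Prod.ext_iff]
    · exact hS x ⟨by linarith, by linarith⟩ (x + t) ⟨by linarith, by linarith⟩
    · have hv : ((x + t, y) : ℝ × ℝ) - (x, y) = (t, 0) := by simp [Prod.ext_iff]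
      rw [hv, hnt0]
    · have hv : ((x, y) : ℝ × ℝ) - (x, 0) = (0, y) := by simp [Prod.ext_iff]
      rw [hv]
      have hn : ‖((0 : ℝ), y)‖ = |y| := by simp [Prod.norm_def, Real.norm_eq_abs]
      rw [hn, abs_of_pos hy.1]
      exact hy.2
  have hEhN : ∀ x ∈ Ioo (0:ℝ) (L1 - t), ∀ y ∈ Set.uIoc (L2 - t) L2, |cross (u (x, y)) (u (x + t, y))| ≤ B := by
    intro x hx y hy
    rw [mem_Ioo] at hx
    rw [Set.uIoc_of_le (by linarith), mem_Ioc] at hy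
    have h1 : ((x, y) : ℝ × ℝ) ∈ R := hmemR _ _ (by linarith) (by linarith) (by linarith) (by linarith)
    have h2 : ((x + t, y) : ℝ × ℝ) ∈ R := hmemR _ _ (by linarith) (by linarith) (by linarith) (by linarith)
    have h3 : ((x, L2) : ℝ × ℝ) ∈ R := hmemR _ _ (by linarith) (by linarith) (by linarith) le_rfl
    have h4 : ((x + t, L2) : ℝ × ℝ) ∈ R := hmemR _ _ (by linarith) (by linarith) (by linarith) le_rfl
    apply hstrip _ _ _ _ h1 h2 h3 h4
    · simp [Prod.ext_iff]
    · exact hN x ⟨by linarith, by linarith⟩ (x + t) ⟨by linarith, by linarith⟩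
    · have hv : ((x + t, y) : ℝ × ℝ) - (x, y) = (t, 0) := by simp [Prod.ext_iff]
      rw [hv, hnt0]
    · have hv : ((x, y) : ℝ × ℝ) - (x, L2) = (0, y - L2) := by simp [Prod.ext_iff]
      rw [hv]
      have hn : ‖((0 : ℝ), y - L2)‖ = |y - L2| := by simp [Prod.norm_def, Real.norm_eq_abs]
      rw [hn, abs_of_nonpos (by linarith)]
      linarith
  have hFvE : ∀ y ∈ Ioo (0:ℝ) (L2 - t), ∀ x ∈ Set.uIoc (L1 - t) L1, |cross (u (x, y)) (u (x, y + t))| ≤ B := by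
    intro y hy x hx
    rw [mem_Ioo] at hy
    rw [Set.uIoc_of_le (by linarith), mem_Ioc] at hx
    have h1 : ((x, y) : ℝ × ℝ) ∈ R := hmemR _ _ (by linarith) (by linarith) (by linarith) (by linarith)
    have h2 : ((x, y + t) : ℝ × ℝ) ∈ R := hmemR _ _ (by linarith) (by linarith) (by linarith) (by linarith)
    have h3 : ((L1, y) : ℝ × ℝ) ∈ R := hmemR _ _ (by linarith) le_rfl (by linarith) (by linarith)
    have h4 : ((L1, y + t) : ℝ × ℝ) ∈ R := hmemR _ _ (by linarith) le_rfl (by linarith) (by linarith)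
    apply hstrip _ _ _ _ h1 h2 h3 h4
    · simp [Prod.ext_iff]
    · exact hE y ⟨by linarith, by linarith⟩ (y + t) ⟨by linarith, by linarith⟩
    · have hv : ((x, y + t) : ℝ × ℝ) - (x, y) = (0, t) := by simp [Prod.ext_iff]
      rw [hv, hn0t]
    · have hv : ((x, y) : ℝ × ℝ) - (L1, y) = (x - L1, 0) := by simp [Prod.ext_iff]
      rw [hv]
      have hn : ‖((x - L1 : ℝ), (0:ℝ))‖ = |x - L1| := by
        simp [Prod.norm_def, Real.norm_eq_abs]
      rw [hn, abs_of_nonpos (by linarith)]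
      linarith
  have hFvW : ∀ y ∈ Ioo (0:ℝ) (L2 - t), ∀ x ∈ Set.uIoc (0:ℝ) t, |cross (u (x, y)) (u (x, y + t))| ≤ B := by
    intro y hy x hx
    rw [mem_Ioo] at hy
    rw [Set.uIoc_of_le ht0.le, mem_Ioc] at hx
    have h1 : ((x, y) : ℝ × ℝ) ∈ R := hmemR _ _ (by linarith) (by linarith) (by linarith) (by linarith)
    have h2 : ((x, y + t) : ℝ × ℝ) ∈ R := hmemR _ _ (by linarith) (by linarith) (by linarith) (by linarith)
    have h3 : ((0, y) : ℝ × ℝ) ∈ R := hmemR _ _ le_rfl (by linarith) (by linarith) (by linarith)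
    have h4 : ((0, y + t) : ℝ × ℝ) ∈ R := hmemR _ _ le_rfl (by linarith) (by linarith) (by linarith)
    apply hstrip _ _ _ _ h1 h2 h3 h4
    · simp [Prod.ext_iff]
    · exact hW y ⟨by linarith, by linarith⟩ (y + t) ⟨by linarith, by linarith⟩
    · have hv : ((x, y + t) : ℝ × ℝ) - (x, y) = (0, t) := by simp [Prod.ext_iff]
      rw [hv, hn0t]
    · have hv : ((x, y) : ℝ × ℝ) - (0, y) = (x, 0) := by simp [Prod.ext_iff]
      rw [hv]
      have hn : ‖((x : ℝ), (0:ℝ))‖ = |x| := by simp [Prod.norm_def, Real.norm_eq_abs]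
      rw [hn, abs_of_pos hx.1]
      exact hx.2
  -- bounds on the two strip integrals
  have hX : |∫ x in Ioo (0:ℝ) (L1 - t),
        ((∫ y in (0:ℝ)..t, cross (u (x, y)) (u (x + t, y)))
          - ∫ y in (L2 - t)..L2, cross (u (x, y)) (u (x + t, y)))| ≤ 2 * (B * t) * (L1 - t) := by
    have hvol : volume (Ioo (0:ℝ) (L1 - t)) < ⊤ := by
      rw [Real.volume_Ioo]; exact ENNReal.ofReal_lt_top
    have hbound : ∀ x ∈ Ioo (0:ℝ) (L1 - t),
        ‖(∫ y in (0:ℝ)..t, cross (u (x, y)) (u (x + t, y)))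
          - ∫ y in (L2 - t)..L2, cross (u (x, y)) (u (x + t, y))‖ ≤ 2 * (B * t) := by
      intro x hx
      have i1 : |∫ y in (0:ℝ)..t, cross (u (x, y)) (u (x + t, y))| ≤ B * |t - 0| := by
        rw [← Real.norm_eq_abs]
        apply intervalIntegral.norm_integral_le_of_norm_le_const
        intro y hy
        rw [Real.norm_eq_abs]
        exact hEhS x hx y hy
      have i2 : |∫ y in (L2 - t)..L2, cross (u (x, y)) (u (x + t, y))| ≤ B * |L2 - (L2 - t)| := by
        rw [← Real.norm_eq_abs]
        apply intervalIntegral.norm_integral_le_of_norm_le_const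
        intro y hy
        rw [Real.norm_eq_abs]
        exact hEhN x hx y hy
      rw [sub_zero, abs_of_pos ht0] at i1
      rw [show L2 - (L2 - t) = t by ring, abs_of_pos ht0] at i2
      rw [Real.norm_eq_abs]
      calc |(∫ y in (0:ℝ)..t, cross (u (x, y)) (u (x + t, y)))
            - ∫ y in (L2 - t)..L2, cross (u (x, y)) (u (x + t, y))|
          ≤ |∫ y in (0:ℝ)..t, cross (u (x, y)) (u (x + t, y))|
            + |∫ y in (L2 - t)..L2, cross (u (x, y)) (u (x + t, y))| := abs_sub _ _
        _ ≤ B * t + B * t := add_le_add i1 i2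
        _ = 2 * (B * t) := by ring
    have hb := norm_setIntegral_le_of_norm_le_const hvol hbound
    rw [Real.norm_eq_abs, measureReal_def] at hb
    rw [Real.volume_Ioo, sub_zero, ENNReal.toReal_ofReal (by linarith)] at hb
    exact hb
  have hY : |∫ y in Ioo (0:ℝ) (L2 - t),
        ((∫ x in (L1 - t)..L1, cross (u (x, y)) (u (x, y + t)))
          - ∫ x in (0:ℝ)..t, cross (u (x, y)) (u (x, y + t)))| ≤ 2 * (B * t) * (L2 - t) := by
    have hvol : volume (Ioo (0:ℝ) (L2 - t)) < ⊤ := by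
      rw [Real.volume_Ioo]; exact ENNReal.ofReal_lt_top
    have hbound : ∀ y ∈ Ioo (0:ℝ) (L2 - t),
        ‖(∫ x in (L1 - t)..L1, cross (u (x, y)) (u (x, y + t)))
          - ∫ x in (0:ℝ)..t, cross (u (x, y)) (u (x, y + t))‖ ≤ 2 * (B * t) := by
      intro y hy
      have i1 : |∫ x in (L1 - t)..L1, cross (u (x, y)) (u (x, y + t))| ≤ B * |L1 - (L1 - t)| := by
        rw [← Real.norm_eq_abs]
        apply intervalIntegral.norm_integral_le_of_norm_le_const
        intro x hx
        rw [Real.norm_eq_abs]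
        exact hFvE y hy x hx
      have i2 : |∫ x in (0:ℝ)..t, cross (u (x, y)) (u (x, y + t))| ≤ B * |t - 0| := by
        rw [← Real.norm_eq_abs]
        apply intervalIntegral.norm_integral_le_of_norm_le_const
        intro x hx
        rw [Real.norm_eq_abs]
        exact hFvW y hy x hx
      rw [sub_zero, abs_of_pos ht0] at i2
      rw [show L1 - (L1 - t) = t by ring, abs_of_pos ht0] at i1
      rw [Real.norm_eq_abs]
      calc |(∫ x in (L1 - t)..L1, cross (u (x, y)) (u (x, y + t)))
            - ∫ x in (0:ℝ)..t, cross (u (x, y)) (u (x, y + t))|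
          ≤ |∫ x in (L1 - t)..L1, cross (u (x, y)) (u (x, y + t))|
            + |∫ x in (0:ℝ)..t, cross (u (x, y)) (u (x, y + t))| := abs_sub _ _
        _ ≤ B * t + B * t := add_le_add i1 i2
        _ = 2 * (B * t) := by ring
    have hb := norm_setIntegral_le_of_norm_le_const hvol hbound
    rw [Real.norm_eq_abs, measureReal_def] at hb
    rw [Real.volume_Ioo, sub_zero, ENNReal.toReal_ofReal (by linarith)] at hb
    exact hb
  -- the shoelace identity
  have hmainS : ∫ p in S, P p
      = (∫ x in Ioo (0:ℝ) (L1 - t),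
            ((∫ y in (0:ℝ)..t, cross (u (x, y)) (u (x + t, y)))
              - ∫ y in (L2 - t)..L2, cross (u (x, y)) (u (x + t, y))))
        + ∫ y in Ioo (0:ℝ) (L2 - t),
            ((∫ x in (L1 - t)..L1, cross (u (x, y)) (u (x, y + t)))
              - ∫ x in (0:ℝ)..t, cross (u (x, y)) (u (x, y + t))) :=
    shoelace L1 L2 t hL1 hL2 ht0 ht1 ht2 u hucont
  have hIP : |∫ p in S, P p| ≤ 2 * (B * t) * (L1 - t) + 2 * (B * t) * (L2 - t) := by
    rw [hmainS]
    exact le_trans (abs_add_le _ _) (add_le_add hX hY)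
  -- integrability facts
  have hPint : IntegrableOn P S := intP L1 L2 t ht0 ht1 ht2 u hucont
  have hGintS : IntegrableOn G S := hGint.mono_set hSOm
  have hSmeasSet : MeasurableSet S := (measurableSet_Ioo.prod measurableSet_Ioo)
  have hSvol : volume S = ENNReal.ofReal ((L1 - t) * (L2 - t)) := by
    rw [hSdef, Measure.volume_eq_prod, Measure.prod_prod, Real.volume_Ioo, Real.volume_Ioo,
      sub_zero, sub_zero, ← ENNReal.ofReal_mul (by linarith)]
  have hSvol_lt : volume S < ⊤ := by rw [hSvol]; exact ENNReal.ofReal_lt_top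
  have hSvol_toReal : (volume S).toReal ≤ L1 * L2 := by
    rw [hSvol]
    apply ENNReal.toReal_le_of_le_ofReal (by positivity)
    apply ENNReal.ofReal_le_ofReal
    nlinarith [ht0.le, ht1, ht2, hL1.le, hL2.le]
  -- compare ∫_S P with t² · 2 ∫_S G
  have hcmp : |t ^ 2 * 2 * (∫ p in S, G p) - ∫ p in S, P p|
      ≤ ((12 * K + 4) * ε₁ * t ^ 2) * (L1 * L2) := by
    have h2 : IntegrableOn (fun p => t ^ 2 * 2 * G p) S := hGintS.const_mul (t ^ 2 * 2)
    have heq : t ^ 2 * 2 * (∫ p in S, G p) - ∫ p in S, P p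
        = ∫ p in S, (t ^ 2 * 2 * G p - P p) := by
      rw [integral_sub h2 hPint, integral_const_mul]
    rw [heq]
    have hb := norm_setIntegral_le_of_norm_le_const (C := (12 * K + 4) * ε₁ * t ^ 2)
      hSvol_lt (fun p hp => by
        rw [Real.norm_eq_abs]
        have h := hptws p hp
        calc |t ^ 2 * 2 * G p - P p| = |t ^ 2 * (2 * G p) - P p| := by ring_nf
          _ ≤ (12 * K + 4) * ε₁ * t ^ 2 := h)
    rw [Real.norm_eq_abs] at hb
    calc |∫ p in S, (t ^ 2 * 2 * G p - P p)| ≤ ((12 * K + 4) * ε₁ * t ^ 2) * (volume S).toReal := hb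
      _ ≤ ((12 * K + 4) * ε₁ * t ^ 2) * (L1 * L2) := by
          apply mul_le_mul_of_nonneg_left hSvol_toReal (by positivity)
  -- split Om into S and the boundary region
  have hsplit : ∫ p in Om L1 L2, G p = (∫ p in S, G p) + ∫ p in Om L1 L2 \ S, G p := by
    conv_lhs => rw [← union_diff_cancel hSOm]
    exact setIntegral_union disjoint_sdiff_self_right
      ((measurableSet_Ioo.prod measurableSet_Ioo).diff hSmeasSet)
      hGintS (hGint.mono_set diff_subset)
  have hdiffvol : volume (Om L1 L2 \ S) ≤ ENNReal.ofReal (t * (L1 + L2)) := by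
    have hsub : Om L1 L2 \ S
        ⊆ (Icc (L1 - t) L1 ×ˢ Icc (0:ℝ) L2) ∪ (Icc (0:ℝ) L1 ×ˢ Icc (L2 - t) L2) := by
      rintro ⟨x, y⟩ ⟨⟨hx, hy⟩, hnot⟩
      rw [mem_Ioo] at hx hy
      by_cases h1 : x < L1 - t
      · right
        have h2 : ¬ y < L2 - t := fun hy' => hnot ⟨⟨hx.1, h1⟩, ⟨hy.1, hy'⟩⟩
        exact ⟨⟨hx.1.le, hx.2.le⟩, ⟨not_lt.mp h2, hy.2.le⟩⟩
      · left
        exact ⟨⟨not_lt.mp h1, hx.2.le⟩, ⟨hy.1.le, hy.2.le⟩⟩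
    have e1 : L1 - (L1 - t) = t := by ring
    have e2 : L2 - (L2 - t) = t := by ring
    calc volume (Om L1 L2 \ S)
        ≤ volume (Icc (L1 - t) L1 ×ˢ Icc (0:ℝ) L2) + volume (Icc (0:ℝ) L1 ×ˢ Icc (L2 - t) L2) :=
          le_trans (measure_mono hsub) (measure_union_le _ _)
      _ = ENNReal.ofReal (t * L2) + ENNReal.ofReal (L1 * t) := by
          rw [Measure.volume_eq_prod, Measure.prod_prod, Measure.prod_prod,
            Real.volume_Icc, Real.volume_Icc, Real.volume_Icc, Real.volume_Icc,
            e1, e2, sub_zero, sub_zero,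
            ← ENNReal.ofReal_mul ht0.le, ← ENNReal.ofReal_mul hL1.le]
      _ = ENNReal.ofReal (t * (L1 + L2)) := by
          rw [← ENNReal.ofReal_add (by positivity) (by positivity)]
          congr 1
          ring
  have hdiff_lt : volume (Om L1 L2 \ S) < ⊤ := lt_of_le_of_lt hdiffvol ENNReal.ofReal_lt_top
  have hdiff_toReal : (volume (Om L1 L2 \ S)).toReal ≤ t * (L1 + L2) :=
    ENNReal.toReal_le_of_le_ofReal (by positivity) hdiffvol
  have hR1 : |∫ p in Om L1 L2 \ S, G p| ≤ (2 * K ^ 2) * (t * (L1 + L2)) := by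
    have hb := norm_setIntegral_le_of_norm_le_const (C := 2 * K ^ 2) hdiff_lt
      (fun p hp => by
        rw [Real.norm_eq_abs]
        exact hGbound p (hOmR hp.1))
    rw [Real.norm_eq_abs] at hb
    exact le_trans hb (mul_le_mul_of_nonneg_left hdiff_toReal (by positivity))
  -- gather the estimates
  set D1 : ℝ := (12 * K + 4) * (L1 * L2) / 2 + (2 * K ^ 2 + 6 * M) * (L1 + L2) with hD1def
  have hBt : B * t ≤ t ^ 2 * ((2 * K ^ 2 + 6 * M) * ε₁) := by
    have h1 : 2 * K ^ 2 * t + 6 * M * ε₁ ≤ (2 * K ^ 2 + 6 * M) * ε₁ := by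
      have := mul_le_mul_of_nonneg_left htε (show (0:ℝ) ≤ 2 * K ^ 2 by positivity)
      linarith
    calc B * t = t ^ 2 * (2 * K ^ 2 * t + 6 * M * ε₁) := by rw [hBdef]; ring
      _ ≤ t ^ 2 * ((2 * K ^ 2 + 6 * M) * ε₁) := mul_le_mul_of_nonneg_left h1 (sq_nonneg t)
  have hBtnn : 0 ≤ B * t := mul_nonneg hBnn ht0.le
  have hIS : |∫ p in S, G p| ≤ ε₁ * D1 := by
    have h1 : 2 * t ^ 2 * |∫ p in S, G p| ≤ 2 * t ^ 2 * (ε₁ * D1) := by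
      have g1 : 2 * (B * t) * (L1 - t) ≤ 2 * (t ^ 2 * ((2 * K ^ 2 + 6 * M) * ε₁)) * L1 := by
        have := mul_le_mul hBt (show L1 - t ≤ L1 by linarith) (by linarith) (by positivity)
        linarith
      have g2 : 2 * (B * t) * (L2 - t) ≤ 2 * (t ^ 2 * ((2 * K ^ 2 + 6 * M) * ε₁)) * L2 := by
        have := mul_le_mul hBt (show L2 - t ≤ L2 by linarith) (by linarith) (by positivity)
        linarith
      calc 2 * t ^ 2 * |∫ p in S, G p| = |t ^ 2 * 2 * (∫ p in S, G p)| := by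
            rw [abs_mul, abs_of_nonneg (show (0:ℝ) ≤ t ^ 2 * 2 by positivity)]
            ring
        _ = |(t ^ 2 * 2 * (∫ p in S, G p) - ∫ p in S, P p) + ∫ p in S, P p| := by
            congr 1
            ring
        _ ≤ |t ^ 2 * 2 * (∫ p in S, G p) - ∫ p in S, P p| + |∫ p in S, P p| := abs_add_le _ _
        _ ≤ ((12 * K + 4) * ε₁ * t ^ 2) * (L1 * L2)
            + (2 * (B * t) * (L1 - t) + 2 * (B * t) * (L2 - t)) := add_le_add hcmp hIP
        _ ≤ ((12 * K + 4) * ε₁ * t ^ 2) * (L1 * L2)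
            + (2 * (t ^ 2 * ((2 * K ^ 2 + 6 * M) * ε₁)) * L1
              + 2 * (t ^ 2 * ((2 * K ^ 2 + 6 * M) * ε₁)) * L2) := by
            have := add_le_add g1 g2
            linarith
        _ = 2 * t ^ 2 * (ε₁ * D1) := by rw [hD1def]; ring
    exact le_of_mul_le_mul_left h1 (by positivity)
  calc |∫ p in Om L1 L2, G p|
      = |(∫ p in S, G p) + ∫ p in Om L1 L2 \ S, G p| := by rw [hsplit]
    _ ≤ |∫ p in S, G p| + |∫ p in Om L1 L2 \ S, G p| := abs_add_le _ _
    _ ≤ ε₁ * D1 + (2 * K ^ 2) * (t * (L1 + L2)) := add_le_add hIS hR1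
    _ ≤ ε₁ * D1 + (2 * K ^ 2) * (ε₁ * (L1 + L2)) := by
        have h1 : t * (L1 + L2) ≤ ε₁ * (L1 + L2) :=
          mul_le_mul_of_nonneg_right htε (by linarith)
        have h2 := mul_le_mul_of_nonneg_left h1 (show (0:ℝ) ≤ 2 * K ^ 2 by positivity)
        linarith
    _ ≤ ε₁ * D0 := by
        have h1 : ε₁ * D1 + (2 * K ^ 2) * (ε₁ * (L1 + L2))
            = ε₁ * (D1 + 2 * K ^ 2 * (L1 + L2)) := by ring
        have h2 : D1 + 2 * K ^ 2 * (L1 + L2) ≤ D0 := by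
          rw [hD1def, hD0def]
          have : (0:ℝ) ≤ 2 * K ^ 2 * (L1 + L2) := by positivity
          linarith
        rw [h1]
        exact mul_le_mul_of_nonneg_left h2 hε₁pos.le
    _ ≤ ε := hε₁D

end Grisvard

/-- Grisvard's identity: if the pair `(u1, u2)` satisfies one linear homogeneous
boundary condition `a_j·u1 + b_j·u2 = 0` (with `(a_j, b_j) ≠ (0,0)`) on each of the
four sides of the rectangle, then `∫_Ω ∂x u2·∂y u1 = ∫_Ω ∂x u1·∂y u2`. -/
theorem stmt11 (L1 L2 : ℝ) (hL1 : 0 < L1) (hL2 : 0 < L2)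
    (aW bW aE bE aS bS aN bN : ℝ)
    (hW0 : (aW, bW) ≠ (0, 0)) (hE0 : (aE, bE) ≠ (0, 0))
    (hS0 : (aS, bS) ≠ (0, 0)) (hN0 : (aN, bN) ≠ (0, 0))
    (u1 u2 : ℝ × ℝ → ℝ)
    (hu1 : ContDiffOn ℝ 1 u1 (Rect L1 L2)) (hu2 : ContDiffOn ℝ 1 u2 (Rect L1 L2))
    (hW : ∀ y ∈ Icc (0 : ℝ) L2, aW * u1 (0, y) + bW * u2 (0, y) = 0)
    (hE : ∀ y ∈ Icc (0 : ℝ) L2, aE * u1 (L1, y) + bE * u2 (L1, y) = 0)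
    (hS : ∀ x ∈ Icc (0 : ℝ) L1, aS * u1 (x, 0) + bS * u2 (x, 0) = 0)
    (hN : ∀ x ∈ Icc (0 : ℝ) L1, aN * u1 (x, L2) + bN * u2 (x, L2) = 0) :
    ∫ p in Om L1 L2, pdx L1 L2 u2 p * pdy L1 L2 u1 p
      = ∫ p in Om L1 L2, pdx L1 L2 u1 p * pdy L1 L2 u2 p := by
  have hW0' : ¬(aW = 0 ∧ bW = 0) := by simpa [Prod.ext_iff] using hW0
  have hE0' : ¬(aE = 0 ∧ bE = 0) := by simpa [Prod.ext_iff] using hE0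
  have hS0' : ¬(aS = 0 ∧ bS = 0) := by simpa [Prod.ext_iff] using hS0
  have hN0' : ¬(aN = 0 ∧ bN = 0) := by simpa [Prod.ext_iff] using hN0
  set u : ℝ × ℝ → ℝ × ℝ := fun p => (u1 p, u2 p) with hudef
  have hu : ContDiffOn ℝ 1 u (Rect L1 L2) := hu1.prodMk hu2
  have hS' : ∀ x ∈ Icc (0:ℝ) L1, ∀ x' ∈ Icc (0:ℝ) L1,
      Grisvard.cross (u (x, 0)) (u (x', 0)) = 0 := fun x hx x' hx' =>
    Grisvard.cross_line hS0' (hS x hx) (hS x' hx')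
  have hN' : ∀ x ∈ Icc (0:ℝ) L1, ∀ x' ∈ Icc (0:ℝ) L1,
      Grisvard.cross (u (x, L2)) (u (x', L2)) = 0 := fun x hx x' hx' =>
    Grisvard.cross_line hN0' (hN x hx) (hN x' hx')
  have hW' : ∀ y ∈ Icc (0:ℝ) L2, ∀ y' ∈ Icc (0:ℝ) L2,
      Grisvard.cross (u (0, y)) (u (0, y')) = 0 := fun y hy y' hy' =>
    Grisvard.cross_line hW0' (hW y hy) (hW y' hy')
  have hE' : ∀ y ∈ Icc (0:ℝ) L2, ∀ y' ∈ Icc (0:ℝ) L2,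
      Grisvard.cross (u (L1, y)) (u (L1, y')) = 0 := fun y hy y' hy' =>
    Grisvard.cross_line hE0' (hE y hy) (hE y' hy')
  have hkey := Grisvard.key L1 L2 hL1 hL2 u hu hS' hN' hW' hE'
  have hOmR : Om L1 L2 ⊆ Rect L1 L2 := prod_mono Ioo_subset_Icc_self Ioo_subset_Icc_self
  have hRuniq : UniqueDiffOn ℝ (Rect L1 L2) := (uniqueDiffOn_Icc hL1).prod (uniqueDiffOn_Icc hL2)
  have hRcomp : IsCompact (Rect L1 L2) := isCompact_Icc.prod isCompact_Icc
  have hcong : ∀ p ∈ Om L1 L2,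
      Grisvard.cross (fderivWithin ℝ u (Rect L1 L2) p (1, 0))
        (fderivWithin ℝ u (Rect L1 L2) p (0, 1))
      = pdx L1 L2 u1 p * pdy L1 L2 u2 p - pdx L1 L2 u2 p * pdy L1 L2 u1 p := by
    intro p hp
    have h1 := ((hu1.differentiableOn one_ne_zero) p (hOmR hp)).hasFDerivWithinAt
    have h2 := ((hu2.differentiableOn one_ne_zero) p (hOmR hp)).hasFDerivWithinAt
    have hder : fderivWithin ℝ u (Rect L1 L2) p
        = (fderivWithin ℝ u1 (Rect L1 L2) p).prod (fderivWithin ℝ u2 (Rect L1 L2) p) :=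
      (HasFDerivWithinAt.prodMk h1 h2).fderivWithin (hRuniq p (hOmR hp))
    rw [hder]
    simp only [Grisvard.cross, ContinuousLinearMap.prod_apply, pdx, pdy]
  rw [setIntegral_congr_fun (show MeasurableSet (Om L1 L2) from measurableSet_Ioo.prod measurableSet_Ioo) hcong] at hkey
  have hc1 : ContinuousOn (fun p => fderivWithin ℝ u1 (Rect L1 L2) p) (Rect L1 L2) :=
    hu1.continuousOn_fderivWithin hRuniq le_rfl
  have hc2 : ContinuousOn (fun p => fderivWithin ℝ u2 (Rect L1 L2) p) (Rect L1 L2) :=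
    hu2.continuousOn_fderivWithin hRuniq le_rfl
  have hint1 : IntegrableOn (fun p => pdx L1 L2 u1 p * pdy L1 L2 u2 p) (Om L1 L2) := by
    apply IntegrableOn.mono_set _ hOmR
    apply ContinuousOn.integrableOn_compact hRcomp
    exact ((hc1.clm_apply continuousOn_const).mul (hc2.clm_apply continuousOn_const))
  have hint2 : IntegrableOn (fun p => pdx L1 L2 u2 p * pdy L1 L2 u1 p) (Om L1 L2) := by
    apply IntegrableOn.mono_set _ hOmR
    apply ContinuousOn.integrableOn_compact hRcomp
    exact ((hc2.clm_apply continuousOn_const).mul (hc1.clm_apply continuousOn_const))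
  rw [integral_sub hint1 hint2] at hkey
  exact (sub_eq_zero.mp hkey).symm
end

section
/- Let u0, v0, φ0, g be positive real numbers with u0² ≠ g·φ0, v0² ≠ g·φ0 and u0² + v0² ≠ g·φ0. Define the real 3×3 matrices 𝓔1 = [[u0, 0, g], [0, u0, 0], [φ0, 0, u0]] and 𝓔2 = [[v0, 0, 0], [0, v0, g], [0, φ0, v0]]. Then 𝓔1 is invertible, and if κ0 ∈ ℂ satisfies κ0² = g·(u0² + v0² − g·φ0)/φ0, then the characteristic polynomial of the complex matrix 𝓔1⁻¹·𝓔2 factors as det(λ·I − 𝓔1⁻¹·𝓔2) = (λ − λ1)·(λ − λ2)·(λ − λ3) with λ1 = (u0·v0 + φ0·κ0)/(u0² − g·φ0), λ2 = (u0·v0 − φ0·κ0)/(u0² − g·φ0), λ3 = v0/u0; moreover λ1, λ2, λ3 are pairwise distinct and 𝓔1⁻¹·𝓔2 is diagonalizable over ℂ. -/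
set_option maxHeartbeats 1000000


open Matrix Polynomial

/-- The coefficient matrices of the linearized 2d inviscid shallow water equations. -/
def swE1 (u0 φ0 g : ℝ) : Matrix (Fin 3) (Fin 3) ℝ :=
  !![u0, 0, g; 0, u0, 0; φ0, 0, u0]

def swE2 (v0 φ0 g : ℝ) : Matrix (Fin 3) (Fin 3) ℝ :=
  !![v0, 0, 0; 0, v0, g; 0, φ0, v0]

lemma charpoly3 (M : Matrix (Fin 3) (Fin 3) ℂ) : M.charpoly =
    X^3 - C (M 0 0 + M 1 1 + M 2 2) * X^2
    + C (M 0 0 * M 1 1 + M 0 0 * M 2 2 + M 1 1 * M 2 2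
        - M 0 1 * M 1 0 - M 0 2 * M 2 0 - M 1 2 * M 2 1) * X
    - C M.det := by
  rw [Matrix.charpoly, Matrix.det_fin_three, Matrix.det_fin_three]
  simp only [charmatrix_apply_eq, charmatrix_apply_ne M 0 1 (by decide),
    charmatrix_apply_ne M 0 2 (by decide), charmatrix_apply_ne M 1 0 (by decide),
    charmatrix_apply_ne M 1 2 (by decide), charmatrix_apply_ne M 2 0 (by decide),
    charmatrix_apply_ne M 2 1 (by decide), C_add, C_mul, C_sub, C_neg]
  ring

lemma aux_factor (L1 L2 L3 t s e : ℂ) (ht : t = L1+L2+L3)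
    (hs : s = L1*L2+L1*L3+L2*L3) (he : e = L1*L2*L3) :
    X^3 - C t*X^2 + C s*X - C e = (X - C L1)*(X - C L2)*(X - C L3) := by
  subst ht hs he
  simp only [C_add, C_mul]
  ring

/-- In the generic case, `𝓔1` is invertible, the characteristic polynomial of
`𝓔1⁻¹·𝓔2` (as a complex matrix) factors with the three roots
`λ1 = (u0·v0 + φ0·κ0)/(u0² - g·φ0)`, `λ2 = (u0·v0 - φ0·κ0)/(u0² - g·φ0)`,
`λ3 = v0/u0`, these roots are pairwise distinct, and `𝓔1⁻¹·𝓔2` is diagonalizable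
over `ℂ`. -/
theorem stmt16 (u0 v0 φ0 g : ℝ)
    (hu0 : 0 < u0) (hv0 : 0 < v0) (hφ0 : 0 < φ0) (hg : 0 < g)
    (h1 : u0 ^ 2 ≠ g * φ0) (h2 : v0 ^ 2 ≠ g * φ0) (h3 : u0 ^ 2 + v0 ^ 2 ≠ g * φ0)
    (κ0 : ℂ)
    (hκ0 : κ0 ^ 2 = (g : ℂ) * ((u0 : ℂ) ^ 2 + (v0 : ℂ) ^ 2 - (g : ℂ) * (φ0 : ℂ)) / (φ0 : ℂ)) :
    IsUnit (swE1 u0 φ0 g).det ∧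
    (((swE1 u0 φ0 g)⁻¹ * swE2 v0 φ0 g).map (algebraMap ℝ ℂ)).charpoly =
      (X - C (((u0 : ℂ) * (v0 : ℂ) + (φ0 : ℂ) * κ0) / ((u0 : ℂ) ^ 2 - (g : ℂ) * (φ0 : ℂ)))) *
      (X - C (((u0 : ℂ) * (v0 : ℂ) - (φ0 : ℂ) * κ0) / ((u0 : ℂ) ^ 2 - (g : ℂ) * (φ0 : ℂ)))) *
      (X - C ((v0 : ℂ) / (u0 : ℂ))) ∧
    (((u0 : ℂ) * (v0 : ℂ) + (φ0 : ℂ) * κ0) / ((u0 : ℂ) ^ 2 - (g : ℂ) * (φ0 : ℂ)) ≠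
      ((u0 : ℂ) * (v0 : ℂ) - (φ0 : ℂ) * κ0) / ((u0 : ℂ) ^ 2 - (g : ℂ) * (φ0 : ℂ))) ∧
    (((u0 : ℂ) * (v0 : ℂ) + (φ0 : ℂ) * κ0) / ((u0 : ℂ) ^ 2 - (g : ℂ) * (φ0 : ℂ)) ≠
      (v0 : ℂ) / (u0 : ℂ)) ∧
    (((u0 : ℂ) * (v0 : ℂ) - (φ0 : ℂ) * κ0) / ((u0 : ℂ) ^ 2 - (g : ℂ) * (φ0 : ℂ)) ≠
      (v0 : ℂ) / (u0 : ℂ)) ∧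
    ∃ Q : Matrix (Fin 3) (Fin 3) ℂ, IsUnit Q.det ∧
      (Q⁻¹ * (((swE1 u0 φ0 g)⁻¹ * swE2 v0 φ0 g).map (algebraMap ℝ ℂ)) * Q).IsDiag := by
  have hdR : u0^2 - g*φ0 ≠ 0 := sub_ne_zero.mpr h1
  have hU : (u0:ℂ) ≠ 0 := by exact_mod_cast hu0.ne'
  have hV : (v0:ℂ) ≠ 0 := by exact_mod_cast hv0.ne'
  have hP : (φ0:ℂ) ≠ 0 := by exact_mod_cast hφ0.ne'
  have hG : (g:ℂ) ≠ 0 := by exact_mod_cast hg.ne'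
  have hd : (u0:ℂ)^2 - (g:ℂ)*(φ0:ℂ) ≠ 0 := by
    have : ((u0^2 - g*φ0 : ℝ) : ℂ) ≠ 0 := by exact_mod_cast hdR
    push_cast at this; exact this
  have hsum : (u0:ℂ)^2 + (v0:ℂ)^2 - (g:ℂ)*(φ0:ℂ) ≠ 0 := by
    have : ((u0^2 + v0^2 - g*φ0 : ℝ) : ℂ) ≠ 0 := by
      exact_mod_cast sub_ne_zero.mpr h3
    push_cast at this; exact this
  have hκ' : κ0^2 * (φ0:ℂ) = (g:ℂ) * ((u0:ℂ)^2 + (v0:ℂ)^2 - (g:ℂ)*(φ0:ℂ)) := by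
    rw [hκ0]; field_simp
  have hκne : κ0 ≠ 0 := by
    intro h
    exact (mul_ne_zero hG hsum)
      (by linear_combination (κ0*(φ0:ℂ))*h - hκ')
  -- determinant of E1
  have hdet : (swE1 u0 φ0 g).det = u0 * (u0^2 - g*φ0) := by
    simp [swE1, Matrix.det_fin_three]; ring
  have hdetU : IsUnit (swE1 u0 φ0 g).det := by
    rw [hdet]; exact isUnit_iff_ne_zero.mpr (mul_ne_zero hu0.ne' hdR)
  -- explicit inverse of E1
  have hinv : (swE1 u0 φ0 g)⁻¹ =
      !![u0/(u0^2-g*φ0), 0, -g/(u0^2-g*φ0); 0, 1/u0, 0;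
         -φ0/(u0^2-g*φ0), 0, u0/(u0^2-g*φ0)] := by
    have hdR' : -(φ0 * g) + u0 ^ 2 ≠ 0 := by
      intro h; exact hdR (by linear_combination h)
    apply inv_eq_right_inv
    ext i j
    fin_cases i <;> fin_cases j <;>
      simp [swE1, Matrix.mul_apply, Fin.sum_univ_three] <;>
      field_simp <;> ring_nf <;> field_simp
  -- explicit form of the complex matrix
  have hM : ((swE1 u0 φ0 g)⁻¹ * swE2 v0 φ0 g).map (algebraMap ℝ ℂ) =
      !![(u0:ℂ)*v0/((u0:ℂ)^2-(g:ℂ)*φ0), -((g:ℂ)*φ0)/((u0:ℂ)^2-(g:ℂ)*φ0),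
           -((g:ℂ)*v0)/((u0:ℂ)^2-(g:ℂ)*φ0);
         0, (v0:ℂ)/u0, (g:ℂ)/u0;
         -((φ0:ℂ)*v0)/((u0:ℂ)^2-(g:ℂ)*φ0), (u0:ℂ)*φ0/((u0:ℂ)^2-(g:ℂ)*φ0),
           (u0:ℂ)*v0/((u0:ℂ)^2-(g:ℂ)*φ0)] := by
    rw [hinv]
    ext i j
    fin_cases i <;> fin_cases j <;>
      simp [swE2, Matrix.mul_apply, Fin.sum_univ_three, Matrix.map_apply] <;>
      push_cast <;> field_simp <;> ring
  have hUc : (u0:ℂ) * ((u0:ℂ))⁻¹ = 1 := mul_inv_cancel₀ hU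
  have hGc : (g:ℂ) * ((g:ℂ))⁻¹ = 1 := mul_inv_cancel₀ hG
  have hdc : ((u0:ℂ)^2 - (g:ℂ)*(φ0:ℂ)) * (((u0:ℂ)^2 - (g:ℂ)*(φ0:ℂ))⁻¹) = 1 :=
    mul_inv_cancel₀ hd
  refine ⟨hdetU, ?_, ?_, ?_, ?_, ?_⟩
  · -- charpoly
    rw [hM, charpoly3]
    refine aux_factor _ _ _ _ _ _ ?_ ?_ ?_
    · simp only [Matrix.cons_val', Matrix.cons_val_zero, Matrix.cons_val_one,
        Matrix.head_cons, Matrix.empty_val', Matrix.cons_val_fin_one, Matrix.head_fin_const,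
        Matrix.cons_val_two, Matrix.tail_cons, Matrix.of_apply]
      ring
    · simp only [Matrix.cons_val', Matrix.cons_val_zero, Matrix.cons_val_one,
        Matrix.head_cons, Matrix.empty_val', Matrix.cons_val_fin_one, Matrix.head_fin_const,
        Matrix.cons_val_two, Matrix.tail_cons, Matrix.of_apply]
      linear_combination ((φ0:ℂ)*(((u0:ℂ)^2-(g:ℂ)*(φ0:ℂ))⁻¹)^2)*hκ'
        + ((g:ℂ)*(φ0:ℂ)*((u0:ℂ)^2-(g:ℂ)*(φ0:ℂ))⁻¹)*hdc
        - ((g:ℂ)*(φ0:ℂ)*((u0:ℂ)^2-(g:ℂ)*(φ0:ℂ))⁻¹)*hUc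
    · rw [Matrix.det_fin_three]
      simp only [Matrix.cons_val', Matrix.cons_val_zero, Matrix.cons_val_one,
        Matrix.head_cons, Matrix.empty_val', Matrix.cons_val_fin_one, Matrix.head_fin_const,
        Matrix.cons_val_two, Matrix.tail_cons, Matrix.of_apply]
      linear_combination
        ((φ0:ℂ)*(v0:ℂ)*(((u0:ℂ)^2-(g:ℂ)*(φ0:ℂ))⁻¹)^2*((u0:ℂ)⁻¹))*hκ'
  · -- λ1 ≠ λ2
    intro h
    rw [div_eq_div_iff hd hd] at h
    exact hκne (mul_left_cancel₀
      (mul_ne_zero (mul_ne_zero two_ne_zero hP) hd) (by linear_combination h))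
  · -- λ1 ≠ λ3
    intro h
    rw [div_eq_div_iff hd hU] at h
    have hz : (u0:ℂ)*κ0 + (g:ℂ)*(v0:ℂ) = 0 := mul_left_cancel₀ hP (by linear_combination h)
    have hre : u0^2*(u0^2+v0^2-g*φ0) = g*v0^2*φ0 := by
      have hc : (u0:ℂ)^2*((u0:ℂ)^2+(v0:ℂ)^2-(g:ℂ)*(φ0:ℂ)) = (g:ℂ)*(v0:ℂ)^2*(φ0:ℂ) := by
        linear_combination ((φ0:ℂ)*((u0:ℂ)*κ0 - (g:ℂ)*(v0:ℂ))/(g:ℂ))*hz - ((u0:ℂ)^2/(g:ℂ))*hκ' - (((u0:ℂ)^2+(v0:ℂ)^2)*((u0:ℂ)^2-(g:ℂ)*(φ0:ℂ)))*hGc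
      have hc2 : ((u0^2*(u0^2+v0^2-g*φ0) : ℝ) : ℂ) = ((g*v0^2*φ0 : ℝ) : ℂ) := by
        push_cast; linear_combination hc
      exact_mod_cast hc2
    have hz2 : (u0^2 - g*φ0)*(u0^2+v0^2) = 0 := by linear_combination hre
    rcases mul_eq_zero.mp hz2 with h'|h'
    · exact h1 (by linarith)
    · have : 0 < u0^2+v0^2 := by positivity
      linarith
  · -- λ2 ≠ λ3
    intro h
    rw [div_eq_div_iff hd hU] at h
    have hz : (u0:ℂ)*κ0 - (g:ℂ)*(v0:ℂ) = 0 := mul_left_cancel₀ hP (by linear_combination -h)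
    have hre : u0^2*(u0^2+v0^2-g*φ0) = g*v0^2*φ0 := by
      have hc : (u0:ℂ)^2*((u0:ℂ)^2+(v0:ℂ)^2-(g:ℂ)*(φ0:ℂ)) = (g:ℂ)*(v0:ℂ)^2*(φ0:ℂ) := by
        linear_combination ((φ0:ℂ)*((u0:ℂ)*κ0 + (g:ℂ)*(v0:ℂ))/(g:ℂ))*hz - ((u0:ℂ)^2/(g:ℂ))*hκ' - (((u0:ℂ)^2+(v0:ℂ)^2)*((u0:ℂ)^2-(g:ℂ)*(φ0:ℂ)))*hGc
      have hc2 : ((u0^2*(u0^2+v0^2-g*φ0) : ℝ) : ℂ) = ((g*v0^2*φ0 : ℝ) : ℂ) := by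
        push_cast; linear_combination hc
      exact_mod_cast hc2
    have hz2 : (u0^2 - g*φ0)*(u0^2+v0^2) = 0 := by linear_combination hre
    rcases mul_eq_zero.mp hz2 with h'|h'
    · exact h1 (by linarith)
    · have : 0 < u0^2+v0^2 := by positivity
      linarith
  · -- diagonalization
    have husum : (u0:ℂ)^2 + (v0:ℂ)^2 ≠ 0 := by
      have h0 : ((u0^2 + v0^2 : ℝ) : ℂ) ≠ 0 := by
        exact_mod_cast (by positivity : (u0^2 + v0^2 : ℝ) ≠ 0)
      push_cast at h0; exact h0
    have hQdet : Matrix.det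
        (!![-(g:ℂ)*((u0:ℂ)*(v0:ℂ) + (φ0:ℂ)*κ0), -(g:ℂ)*((u0:ℂ)*(v0:ℂ) - (φ0:ℂ)*κ0), (u0:ℂ);
            (g:ℂ)*((u0:ℂ)^2-(g:ℂ)*(φ0:ℂ)), (g:ℂ)*((u0:ℂ)^2-(g:ℂ)*(φ0:ℂ)), (v0:ℂ);
            (φ0:ℂ)*((g:ℂ)*(v0:ℂ) + (u0:ℂ)*κ0), (φ0:ℂ)*((g:ℂ)*(v0:ℂ) - (u0:ℂ)*κ0), 0]) =
        -2*(g:ℂ)*(φ0:ℂ)*((u0:ℂ)^2-(g:ℂ)*(φ0:ℂ))*κ0*((u0:ℂ)^2+(v0:ℂ)^2) := by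
      rw [Matrix.det_fin_three]
      simp only [Matrix.cons_val', Matrix.cons_val_zero, Matrix.cons_val_one,
        Matrix.cons_val_two, Matrix.head_cons, Matrix.tail_cons, Matrix.head_fin_const,
        Matrix.empty_val', Matrix.cons_val_fin_one, Matrix.of_apply]
      ring
    have hQu : IsUnit (Matrix.det
        (!![-(g:ℂ)*((u0:ℂ)*(v0:ℂ) + (φ0:ℂ)*κ0), -(g:ℂ)*((u0:ℂ)*(v0:ℂ) - (φ0:ℂ)*κ0), (u0:ℂ);
            (g:ℂ)*((u0:ℂ)^2-(g:ℂ)*(φ0:ℂ)), (g:ℂ)*((u0:ℂ)^2-(g:ℂ)*(φ0:ℂ)), (v0:ℂ);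
            (φ0:ℂ)*((g:ℂ)*(v0:ℂ) + (u0:ℂ)*κ0), (φ0:ℂ)*((g:ℂ)*(v0:ℂ) - (u0:ℂ)*κ0), 0])) := by
      rw [hQdet]
      exact isUnit_iff_ne_zero.mpr
        (mul_ne_zero (mul_ne_zero (mul_ne_zero (mul_ne_zero (mul_ne_zero
          (by norm_num) hG) hP) hd) hκne) husum)
    refine ⟨_, hQu, ?_⟩
    rw [hM]
    have hQD :
        (!![(u0:ℂ)*(v0:ℂ)/((u0:ℂ)^2-(g:ℂ)*(φ0:ℂ)), -((g:ℂ)*(φ0:ℂ))/((u0:ℂ)^2-(g:ℂ)*(φ0:ℂ)),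
              -((g:ℂ)*(v0:ℂ))/((u0:ℂ)^2-(g:ℂ)*(φ0:ℂ));
            0, (v0:ℂ)/(u0:ℂ), (g:ℂ)/(u0:ℂ);
            -((φ0:ℂ)*(v0:ℂ))/((u0:ℂ)^2-(g:ℂ)*(φ0:ℂ)), (u0:ℂ)*(φ0:ℂ)/((u0:ℂ)^2-(g:ℂ)*(φ0:ℂ)),
              (u0:ℂ)*(v0:ℂ)/((u0:ℂ)^2-(g:ℂ)*(φ0:ℂ))] *
          !![-(g:ℂ)*((u0:ℂ)*(v0:ℂ) + (φ0:ℂ)*κ0), -(g:ℂ)*((u0:ℂ)*(v0:ℂ) - (φ0:ℂ)*κ0), (u0:ℂ);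
            (g:ℂ)*((u0:ℂ)^2-(g:ℂ)*(φ0:ℂ)), (g:ℂ)*((u0:ℂ)^2-(g:ℂ)*(φ0:ℂ)), (v0:ℂ);
            (φ0:ℂ)*((g:ℂ)*(v0:ℂ) + (u0:ℂ)*κ0), (φ0:ℂ)*((g:ℂ)*(v0:ℂ) - (u0:ℂ)*κ0), 0]) =
        !![-(g:ℂ)*((u0:ℂ)*(v0:ℂ) + (φ0:ℂ)*κ0), -(g:ℂ)*((u0:ℂ)*(v0:ℂ) - (φ0:ℂ)*κ0), (u0:ℂ);
            (g:ℂ)*((u0:ℂ)^2-(g:ℂ)*(φ0:ℂ)), (g:ℂ)*((u0:ℂ)^2-(g:ℂ)*(φ0:ℂ)), (v0:ℂ);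
            (φ0:ℂ)*((g:ℂ)*(v0:ℂ) + (u0:ℂ)*κ0), (φ0:ℂ)*((g:ℂ)*(v0:ℂ) - (u0:ℂ)*κ0), 0] *
          Matrix.diagonal
            ![((u0:ℂ)*(v0:ℂ) + (φ0:ℂ)*κ0)/((u0:ℂ)^2-(g:ℂ)*(φ0:ℂ)),
              ((u0:ℂ)*(v0:ℂ) - (φ0:ℂ)*κ0)/((u0:ℂ)^2-(g:ℂ)*(φ0:ℂ)),
              (v0:ℂ)/(u0:ℂ)] := by
      ext i j
      fin_cases i <;> fin_cases j <;>
        simp [Matrix.mul_apply, Fin.sum_univ_three, Matrix.mul_diagonal] <;>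
        first
          | ring1
          | linear_combination ((g:ℂ)*(φ0:ℂ)*((u0:ℂ)^2-(g:ℂ)*(φ0:ℂ))⁻¹)*hκ'
          | linear_combination (-(φ0:ℂ)*(u0:ℂ)*((u0:ℂ)^2-(g:ℂ)*(φ0:ℂ))⁻¹)*hκ'
          | linear_combination ((v0:ℂ))*hdc - ((v0:ℂ))*hUc
          | linear_combination ((g:ℂ)*((u0:ℂ)*(v0:ℂ)+(φ0:ℂ)*κ0))*hUc - ((g:ℂ)*((u0:ℂ)*(v0:ℂ)+(φ0:ℂ)*κ0))*hdc
          | linear_combination ((g:ℂ)*((u0:ℂ)*(v0:ℂ)-(φ0:ℂ)*κ0))*hUc - ((g:ℂ)*((u0:ℂ)*(v0:ℂ)-(φ0:ℂ)*κ0))*hdc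
    rw [Matrix.mul_assoc, hQD, ← Matrix.mul_assoc, Matrix.nonsing_inv_mul _ hQu,
      Matrix.one_mul]
    exact Matrix.isDiag_diagonal _
end

section
/- Let u0, v0, b10, b20, φ0, g be real numbers and define the real 5×5 matrices 𝓔1 = [[u0,0,−b10,0,g],[0,u0,0,−b10,0],[−b10,0,u0,0,0],[0,−b10,0,u0,0],[φ0,0,0,0,u0]] and 𝓔2 = [[v0,0,−b20,0,0],[0,v0,0,−b20,g],[−b20,0,v0,0,0],[0,−b20,0,v0,0],[0,φ0,0,0,v0]]. Assume 𝓔1 is invertible, b10 + u0 ≠ 0, b10 − u0 ≠ 0, and b10² − u0² + g·φ0 ≠ 0, and let δ ∈ ℂ satisfy δ² = (b10·b20 − u0·v0)² − (b10² − u0² + g·φ0)·(b20² − v0² + g·φ0). Then the characteristic polynomial of the complex matrix 𝓔1⁻¹·𝓔2 factors as det(λ·I − 𝓔1⁻¹·𝓔2) = (λ−λ1)(λ−λ2)(λ−λ3)(λ−λ4)(λ−λ5) where λ1 = (b20 + v0)/(b10 + u0), λ2 = (b20 − v0)/(b10 − u0), λ3 = ((b10·b20 − u0·v0) + δ)/(b10²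 − u0² + g·φ0), λ4 = ((b10·b20 − u0·v0) − δ)/(b10² − u0² + g·φ0), λ5 = v0/u0 (assuming also u0 ≠ 0). -/
open Matrix Polynomial

/-- The coefficient matrices of the linearized 2d shallow water MHD equations. -/
def swmhdE1 (u0 b10 φ0 g : ℝ) : Matrix (Fin 5) (Fin 5) ℝ :=
  !![u0, 0, -b10, 0, g;
     0, u0, 0, -b10, 0;
     -b10, 0, u0, 0, 0;
     0, -b10, 0, u0, 0;
     φ0, 0, 0, 0, u0]

def swmhdE2 (v0 b20 φ0 g : ℝ) : Matrix (Fin 5) (Fin 5) ℝ :=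
  !![v0, 0, -b20, 0, 0;
     0, v0, 0, -b20, g;
     -b20, 0, v0, 0, 0;
     0, -b20, 0, v0, 0;
     0, φ0, 0, 0, v0]

private theorem det_fin_four' {R : Type*} [CommRing R] (A : Matrix (Fin 4) (Fin 4) R) :
    det A =
      A 0 0 * A 1 1 * A 2 2 * A 3 3 - A 0 0 * A 1 1 * A 2 3 * A 3 2 -
      A 0 0 * A 1 2 * A 2 1 * A 3 3 + A 0 0 * A 1 2 * A 2 3 * A 3 1 +
      A 0 0 * A 1 3 * A 2 1 * A 3 2 - A 0 0 * A 1 3 * A 2 2 * A 3 1 -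
      A 0 1 * A 1 0 * A 2 2 * A 3 3 + A 0 1 * A 1 0 * A 2 3 * A 3 2 +
      A 0 1 * A 1 2 * A 2 0 * A 3 3 - A 0 1 * A 1 2 * A 2 3 * A 3 0 -
      A 0 1 * A 1 3 * A 2 0 * A 3 2 + A 0 1 * A 1 3 * A 2 2 * A 3 0 +
      A 0 2 * A 1 0 * A 2 1 * A 3 3 - A 0 2 * A 1 0 * A 2 3 * A 3 1 -
      A 0 2 * A 1 1 * A 2 0 * A 3 3 + A 0 2 * A 1 1 * A 2 3 * A 3 0 +
      A 0 2 * A 1 3 * A 2 0 * A 3 1 - A 0 2 * A 1 3 * A 2 1 * A 3 0 -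
      A 0 3 * A 1 0 * A 2 1 * A 3 2 + A 0 3 * A 1 0 * A 2 2 * A 3 1 +
      A 0 3 * A 1 1 * A 2 0 * A 3 2 - A 0 3 * A 1 1 * A 2 2 * A 3 0 -
      A 0 3 * A 1 2 * A 2 0 * A 3 1 + A 0 3 * A 1 2 * A 2 1 * A 3 0 := by
  rw [Matrix.det_succ_row_zero]
  simp [Fin.sum_univ_succ, Matrix.det_fin_three,
    show Fin.succAbove (2 : Fin 4) 2 = 3 from rfl, show Fin.succAbove (3 : Fin 4) 2 = 2 from rfl,
    show Fin.succAbove (1 : Fin 4) 2 = 3 from rfl]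
  ring

set_option maxHeartbeats 2000000 in
set_option maxRecDepth 8000 in
private theorem det_fin_five' {R : Type*} [CommRing R] (A : Matrix (Fin 5) (Fin 5) R) :
    det A =
0
      + A 0 0*A 1 1*A 2 2*A 3 3*A 4 4
      - A 0 0*A 1 1*A 2 2*A 3 4*A 4 3
      - A 0 0*A 1 1*A 2 3*A 3 2*A 4 4
      + A 0 0*A 1 1*A 2 3*A 3 4*A 4 2
      + A 0 0*A 1 1*A 2 4*A 3 2*A 4 3
      - A 0 0*A 1 1*A 2 4*A 3 3*A 4 2
      - A 0 0*A 1 2*A 2 1*A 3 3*A 4 4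
      + A 0 0*A 1 2*A 2 1*A 3 4*A 4 3
      + A 0 0*A 1 2*A 2 3*A 3 1*A 4 4
      - A 0 0*A 1 2*A 2 3*A 3 4*A 4 1
      - A 0 0*A 1 2*A 2 4*A 3 1*A 4 3
      + A 0 0*A 1 2*A 2 4*A 3 3*A 4 1
      + A 0 0*A 1 3*A 2 1*A 3 2*A 4 4
      - A 0 0*A 1 3*A 2 1*A 3 4*A 4 2
      - A 0 0*A 1 3*A 2 2*A 3 1*A 4 4
      + A 0 0*A 1 3*A 2 2*A 3 4*A 4 1
      + A 0 0*A 1 3*A 2 4*A 3 1*A 4 2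
      - A 0 0*A 1 3*A 2 4*A 3 2*A 4 1
      - A 0 0*A 1 4*A 2 1*A 3 2*A 4 3
      + A 0 0*A 1 4*A 2 1*A 3 3*A 4 2
      + A 0 0*A 1 4*A 2 2*A 3 1*A 4 3
      - A 0 0*A 1 4*A 2 2*A 3 3*A 4 1
      - A 0 0*A 1 4*A 2 3*A 3 1*A 4 2
      + A 0 0*A 1 4*A 2 3*A 3 2*A 4 1
      - A 0 1*A 1 0*A 2 2*A 3 3*A 4 4
      + A 0 1*A 1 0*A 2 2*A 3 4*A 4 3
      + A 0 1*A 1 0*A 2 3*A 3 2*A 4 4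
      - A 0 1*A 1 0*A 2 3*A 3 4*A 4 2
      - A 0 1*A 1 0*A 2 4*A 3 2*A 4 3
      + A 0 1*A 1 0*A 2 4*A 3 3*A 4 2
      + A 0 1*A 1 2*A 2 0*A 3 3*A 4 4
      - A 0 1*A 1 2*A 2 0*A 3 4*A 4 3
      - A 0 1*A 1 2*A 2 3*A 3 0*A 4 4
      + A 0 1*A 1 2*A 2 3*A 3 4*A 4 0
      + A 0 1*A 1 2*A 2 4*A 3 0*A 4 3
      - A 0 1*A 1 2*A 2 4*A 3 3*A 4 0
      - A 0 1*A 1 3*A 2 0*A 3 2*A 4 4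
      + A 0 1*A 1 3*A 2 0*A 3 4*A 4 2
      + A 0 1*A 1 3*A 2 2*A 3 0*A 4 4
      - A 0 1*A 1 3*A 2 2*A 3 4*A 4 0
      - A 0 1*A 1 3*A 2 4*A 3 0*A 4 2
      + A 0 1*A 1 3*A 2 4*A 3 2*A 4 0
      + A 0 1*A 1 4*A 2 0*A 3 2*A 4 3
      - A 0 1*A 1 4*A 2 0*A 3 3*A 4 2
      - A 0 1*A 1 4*A 2 2*A 3 0*A 4 3
      + A 0 1*A 1 4*A 2 2*A 3 3*A 4 0
      + A 0 1*A 1 4*A 2 3*A 3 0*A 4 2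
      - A 0 1*A 1 4*A 2 3*A 3 2*A 4 0
      + A 0 2*A 1 0*A 2 1*A 3 3*A 4 4
      - A 0 2*A 1 0*A 2 1*A 3 4*A 4 3
      - A 0 2*A 1 0*A 2 3*A 3 1*A 4 4
      + A 0 2*A 1 0*A 2 3*A 3 4*A 4 1
      + A 0 2*A 1 0*A 2 4*A 3 1*A 4 3
      - A 0 2*A 1 0*A 2 4*A 3 3*A 4 1
      - A 0 2*A 1 1*A 2 0*A 3 3*A 4 4
      + A 0 2*A 1 1*A 2 0*A 3 4*A 4 3
      + A 0 2*A 1 1*A 2 3*A 3 0*A 4 4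
      - A 0 2*A 1 1*A 2 3*A 3 4*A 4 0
      - A 0 2*A 1 1*A 2 4*A 3 0*A 4 3
      + A 0 2*A 1 1*A 2 4*A 3 3*A 4 0
      + A 0 2*A 1 3*A 2 0*A 3 1*A 4 4
      - A 0 2*A 1 3*A 2 0*A 3 4*A 4 1
      - A 0 2*A 1 3*A 2 1*A 3 0*A 4 4
      + A 0 2*A 1 3*A 2 1*A 3 4*A 4 0
      + A 0 2*A 1 3*A 2 4*A 3 0*A 4 1
      - A 0 2*A 1 3*A 2 4*A 3 1*A 4 0
      - A 0 2*A 1 4*A 2 0*A 3 1*A 4 3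
      + A 0 2*A 1 4*A 2 0*A 3 3*A 4 1
      + A 0 2*A 1 4*A 2 1*A 3 0*A 4 3
      - A 0 2*A 1 4*A 2 1*A 3 3*A 4 0
      - A 0 2*A 1 4*A 2 3*A 3 0*A 4 1
      + A 0 2*A 1 4*A 2 3*A 3 1*A 4 0
      - A 0 3*A 1 0*A 2 1*A 3 2*A 4 4
      + A 0 3*A 1 0*A 2 1*A 3 4*A 4 2
      + A 0 3*A 1 0*A 2 2*A 3 1*A 4 4
      - A 0 3*A 1 0*A 2 2*A 3 4*A 4 1
      - A 0 3*A 1 0*A 2 4*A 3 1*A 4 2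
      + A 0 3*A 1 0*A 2 4*A 3 2*A 4 1
      + A 0 3*A 1 1*A 2 0*A 3 2*A 4 4
      - A 0 3*A 1 1*A 2 0*A 3 4*A 4 2
      - A 0 3*A 1 1*A 2 2*A 3 0*A 4 4
      + A 0 3*A 1 1*A 2 2*A 3 4*A 4 0
      + A 0 3*A 1 1*A 2 4*A 3 0*A 4 2
      - A 0 3*A 1 1*A 2 4*A 3 2*A 4 0
      - A 0 3*A 1 2*A 2 0*A 3 1*A 4 4
      + A 0 3*A 1 2*A 2 0*A 3 4*A 4 1
      + A 0 3*A 1 2*A 2 1*A 3 0*A 4 4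
      - A 0 3*A 1 2*A 2 1*A 3 4*A 4 0
      - A 0 3*A 1 2*A 2 4*A 3 0*A 4 1
      + A 0 3*A 1 2*A 2 4*A 3 1*A 4 0
      + A 0 3*A 1 4*A 2 0*A 3 1*A 4 2
      - A 0 3*A 1 4*A 2 0*A 3 2*A 4 1
      - A 0 3*A 1 4*A 2 1*A 3 0*A 4 2
      + A 0 3*A 1 4*A 2 1*A 3 2*A 4 0
      + A 0 3*A 1 4*A 2 2*A 3 0*A 4 1
      - A 0 3*A 1 4*A 2 2*A 3 1*A 4 0
      + A 0 4*A 1 0*A 2 1*A 3 2*A 4 3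
      - A 0 4*A 1 0*A 2 1*A 3 3*A 4 2
      - A 0 4*A 1 0*A 2 2*A 3 1*A 4 3
      + A 0 4*A 1 0*A 2 2*A 3 3*A 4 1
      + A 0 4*A 1 0*A 2 3*A 3 1*A 4 2
      - A 0 4*A 1 0*A 2 3*A 3 2*A 4 1
      - A 0 4*A 1 1*A 2 0*A 3 2*A 4 3
      + A 0 4*A 1 1*A 2 0*A 3 3*A 4 2
      + A 0 4*A 1 1*A 2 2*A 3 0*A 4 3
      - A 0 4*A 1 1*A 2 2*A 3 3*A 4 0
      - A 0 4*A 1 1*A 2 3*A 3 0*A 4 2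
      + A 0 4*A 1 1*A 2 3*A 3 2*A 4 0
      + A 0 4*A 1 2*A 2 0*A 3 1*A 4 3
      - A 0 4*A 1 2*A 2 0*A 3 3*A 4 1
      - A 0 4*A 1 2*A 2 1*A 3 0*A 4 3
      + A 0 4*A 1 2*A 2 1*A 3 3*A 4 0
      + A 0 4*A 1 2*A 2 3*A 3 0*A 4 1
      - A 0 4*A 1 2*A 2 3*A 3 1*A 4 0
      - A 0 4*A 1 3*A 2 0*A 3 1*A 4 2
      + A 0 4*A 1 3*A 2 0*A 3 2*A 4 1
      + A 0 4*A 1 3*A 2 1*A 3 0*A 4 2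
      - A 0 4*A 1 3*A 2 1*A 3 2*A 4 0
      - A 0 4*A 1 3*A 2 2*A 3 0*A 4 1
      + A 0 4*A 1 3*A 2 2*A 3 1*A 4 0
 := by
  rw [Matrix.det_succ_row_zero]
  simp only [Fin.sum_univ_succ, Fin.sum_univ_zero, add_zero, det_fin_four', submatrix_apply]
  norm_num [Fin.succAbove, Fin.lt_def, show (((0:Fin 4)):ℕ) = 0 from rfl, show (((1:Fin 4)):ℕ) = 1 from rfl, show (((2:Fin 4)):ℕ) = 2 from rfl, show (((3:Fin 4)):ℕ) = 3 from rfl, show (((0:Fin 5)):ℕ) = 0 from rfl, show (((1:Fin 5)):ℕ) = 1 from rfl, show (((2:Fin 5)):ℕ) = 2 from rfl, show (((3:Fin 5)):ℕ) = 3 from rfl, show (((4:Fin 5)):ℕ) = 4 from rfl, show (Fin.castSucc (0:Fin 4) : Fin 5) = 0 from rfl, show (Fin.castSucc (1:Fin 4) : Fin 5) = 1 from rfl, show (Fin.castSucc (2:Fin 4) : Fin 5) = 2 from rfl, show (Fin.castSucc (3:Fin 4) : Fin 5) = 3 from rfl, show (Fin.succ (0:Fin 4) : Fin 5) = 1 from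 rfl, show (Fin.succ (1:Fin 4) : Fin 5) = 2 from rfl, show (Fin.succ (2:Fin 4) : Fin 5) = 3 from rfl, show (Fin.succ (3:Fin 4) : Fin 5) = 4 from rfl, show (((2:Fin 3).succ).succ : Fin 5) = 4 from rfl, show ((2:Fin 3).succ : Fin 4) = 3 from rfl, show ((1:Fin 2).succ : Fin 3) = 2 from rfl, show (((1:Fin 2).succ).succ : Fin 4) = 3 from rfl, show ((((1:Fin 2).succ).succ).succ : Fin 5) = 4 from rfl]
  ring

set_option maxHeartbeats 1000000 in
set_option maxRecDepth 8000 in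
private theorem det5special (a b c d e f : ℂ) :
    (!![a, 0, b, 0, c; 0, a, 0, b, d; b, 0, a, 0, 0; 0, b, 0, a, 0; e, f, 0, 0, a] :
      Matrix (Fin 5) (Fin 5) ℂ).det = a * (a^2 - b^2) * (a^2 - b^2 - c*e - d*f) := by
  rw [det_fin_five']
  simp [Matrix.vecHead, Matrix.vecTail]
  ring

private theorem eval_charpoly' (B : Matrix (Fin 5) (Fin 5) ℂ) (x : ℂ) :
    B.charpoly.eval x = (x • (1 : Matrix (Fin 5) (Fin 5) ℂ) - B).det := by
  have h : B.charpoly.eval x = (evalRingHom x) B.charmatrix.det := rfl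
  rw [h, RingHom.map_det]
  congr 1
  ext i j
  by_cases h : i = j <;>
    simp [h, charmatrix_apply, Matrix.one_apply, Matrix.smul_apply]

set_option maxHeartbeats 1000000 in
set_option maxRecDepth 8000 in
/-- The characteristic polynomial of `𝓔1⁻¹·𝓔2` for the linearized SWMHD system factors
with the five roots `λ1 = (b20+v0)/(b10+u0)`, `λ2 = (b20-v0)/(b10-u0)`,
`λ3,4 = ((b10·b20-u0·v0) ± δ)/(b10²-u0²+g·φ0)`, `λ5 = v0/u0`. -/
theorem stmt17 (u0 v0 b10 b20 φ0 g : ℝ)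
    (hE1 : IsUnit (swmhdE1 u0 b10 φ0 g).det)
    (h1 : b10 + u0 ≠ 0) (h2 : b10 - u0 ≠ 0)
    (h3 : b10 ^ 2 - u0 ^ 2 + g * φ0 ≠ 0) (hu0 : u0 ≠ 0)
    (δ : ℂ)
    (hδ : δ ^ 2 = ((b10 : ℂ) * (b20 : ℂ) - (u0 : ℂ) * (v0 : ℂ)) ^ 2 -
      ((b10 : ℂ) ^ 2 - (u0 : ℂ) ^ 2 + (g : ℂ) * (φ0 : ℂ)) *
        ((b20 : ℂ) ^ 2 - (v0 : ℂ) ^ 2 + (g : ℂ) * (φ0 : ℂ))) :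
    (((swmhdE1 u0 b10 φ0 g)⁻¹ * swmhdE2 v0 b20 φ0 g).map (algebraMap ℝ ℂ)).charpoly =
      (X - C (((b20 : ℂ) + (v0 : ℂ)) / ((b10 : ℂ) + (u0 : ℂ)))) *
      (X - C (((b20 : ℂ) - (v0 : ℂ)) / ((b10 : ℂ) - (u0 : ℂ)))) *
      (X - C ((((b10 : ℂ) * (b20 : ℂ) - (u0 : ℂ) * (v0 : ℂ)) + δ) /
        ((b10 : ℂ) ^ 2 - (u0 : ℂ) ^ 2 + (g : ℂ) * (φ0 : ℂ)))) *
      (X - C ((((b10 : ℂ) * (b20 : ℂ) - (u0 : ℂ) * (v0 : ℂ)) - δ) /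
        ((b10 : ℂ) ^ 2 - (u0 : ℂ) ^ 2 + (g : ℂ) * (φ0 : ℂ)))) *
      (X - C ((v0 : ℂ) / (u0 : ℂ))) := by
  set l1 : ℂ := ((b20 : ℂ) + (v0 : ℂ)) / ((b10 : ℂ) + (u0 : ℂ)) with hl1
  set l2 : ℂ := ((b20 : ℂ) - (v0 : ℂ)) / ((b10 : ℂ) - (u0 : ℂ)) with hl2
  set r3 : ℂ := (((b10 : ℂ) * (b20 : ℂ) - (u0 : ℂ) * (v0 : ℂ)) + δ) /
    ((b10 : ℂ) ^ 2 - (u0 : ℂ) ^ 2 + (g : ℂ) * (φ0 : ℂ)) with hr3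
  set r4 : ℂ := (((b10 : ℂ) * (b20 : ℂ) - (u0 : ℂ) * (v0 : ℂ)) - δ) /
    ((b10 : ℂ) ^ 2 - (u0 : ℂ) ^ 2 + (g : ℂ) * (φ0 : ℂ)) with hr4
  set l5 : ℂ := (v0 : ℂ) / (u0 : ℂ) with hl5
  have hu1 : (b10 : ℂ) + (u0 : ℂ) ≠ 0 := by
    intro h; apply h1
    exact_mod_cast (by push_cast; exact h : ((b10 + u0 : ℝ) : ℂ) = 0)
  have hu2 : (b10 : ℂ) - (u0 : ℂ) ≠ 0 := by
    intro h; apply h2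
    exact_mod_cast (by push_cast; exact h : ((b10 - u0 : ℝ) : ℂ) = 0)
  have hu3 : (b10 : ℂ) ^ 2 - (u0 : ℂ) ^ 2 + (g : ℂ) * (φ0 : ℂ) ≠ 0 := by
    intro h; apply h3
    exact_mod_cast (by push_cast; exact h : ((b10 ^ 2 - u0 ^ 2 + g * φ0 : ℝ) : ℂ) = 0)
  have hu5 : (u0 : ℂ) ≠ 0 := by exact_mod_cast hu0
  set M1 : Matrix (Fin 5) (Fin 5) ℂ := (swmhdE1 u0 b10 φ0 g).map (algebraMap ℝ ℂ) with hM1def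
  set M2 : Matrix (Fin 5) (Fin 5) ℂ := (swmhdE2 v0 b20 φ0 g).map (algebraMap ℝ ℂ) with hM2def
  have hdetM1 : M1.det = algebraMap ℝ ℂ (swmhdE1 u0 b10 φ0 g).det := by
    rw [hM1def, ← RingHom.mapMatrix_apply, ← RingHom.map_det]
  have hM1unit : IsUnit M1.det := by
    rw [hdetM1]; exact hE1.map (algebraMap ℝ ℂ)
  have hM1ne : M1.det ≠ 0 := hM1unit.ne_zero
  have hmap : ((swmhdE1 u0 b10 φ0 g)⁻¹ * swmhdE2 v0 b20 φ0 g).map (algebraMap ℝ ℂ)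
      = M1⁻¹ * M2 := by
    rw [Matrix.map_mul]
    congr 1
    symm
    apply Matrix.inv_eq_right_inv
    rw [hM1def, ← Matrix.map_mul, Matrix.mul_nonsing_inv _ hE1]
    ext i j
    by_cases h : i = j <;> simp [h, Matrix.one_apply, Matrix.map_apply]
  rw [hmap]
  apply Polynomial.funext
  intro x
  rw [eval_charpoly']
  simp only [eval_mul, eval_sub, eval_X, eval_C]
  apply mul_left_cancel₀ hM1ne
  have hmul : M1.det * (x • (1 : Matrix (Fin 5) (Fin 5) ℂ) - M1⁻¹ * M2).det
      = (x • M1 - M2).det := by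
    rw [← Matrix.det_mul, Matrix.mul_sub, Matrix.mul_smul, Matrix.mul_one,
      ← Matrix.mul_assoc, Matrix.mul_nonsing_inv _ hM1unit, Matrix.one_mul]
  rw [hmul]
  have hM1c : M1 = !![(u0:ℂ), 0, -(b10:ℂ), 0, (g:ℂ);
      0, (u0:ℂ), 0, -(b10:ℂ), 0;
      -(b10:ℂ), 0, (u0:ℂ), 0, 0;
      0, -(b10:ℂ), 0, (u0:ℂ), 0;
      (φ0:ℂ), 0, 0, 0, (u0:ℂ)] := by
    ext i j
    fin_cases i <;> fin_cases j <;>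
      simp [hM1def, swmhdE1, Matrix.map_apply, Matrix.vecHead, Matrix.vecTail]
  have hNc : x • M1 - M2 = !![x*(u0:ℂ) - (v0:ℂ), 0, -(x*(b10:ℂ)) + (b20:ℂ), 0, x*(g:ℂ);
      0, x*(u0:ℂ) - (v0:ℂ), 0, -(x*(b10:ℂ)) + (b20:ℂ), -(g:ℂ);
      -(x*(b10:ℂ)) + (b20:ℂ), 0, x*(u0:ℂ) - (v0:ℂ), 0, 0;
      0, -(x*(b10:ℂ)) + (b20:ℂ), 0, x*(u0:ℂ) - (v0:ℂ), 0;
      x*(φ0:ℂ), -(φ0:ℂ), 0, 0, x*(u0:ℂ) - (v0:ℂ)] := by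
    ext i j
    fin_cases i <;> fin_cases j <;>
      simp [hM1def, hM2def, swmhdE1, swmhdE2, Matrix.map_apply, Matrix.smul_apply,
        Matrix.sub_apply, Matrix.vecHead, Matrix.vecTail] <;> ring
  have hdet1c : M1.det = (u0:ℂ) * ((u0:ℂ)^2 - (b10:ℂ)^2) *
      ((u0:ℂ)^2 - (b10:ℂ)^2 - (g:ℂ)*(φ0:ℂ)) := by
    rw [hM1c, det5special]; ring
  rw [hNc, det5special, hdet1c]
  have h34 : (x - r3) * (x - r4) =
      x^2 - (2 * ((b10:ℂ) * (b20:ℂ) - (u0:ℂ) * (v0:ℂ)) /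
        ((b10:ℂ)^2 - (u0:ℂ)^2 + (g:ℂ) * (φ0:ℂ))) * x +
      ((b20:ℂ)^2 - (v0:ℂ)^2 + (g:ℂ) * (φ0:ℂ)) /
        ((b10:ℂ)^2 - (u0:ℂ)^2 + (g:ℂ) * (φ0:ℂ)) := by
    rw [hr3, hr4]
    field_simp
    linear_combination (-1 : ℂ) * hδ
  rw [show (x - l1) * (x - l2) * (x - r3) * (x - r4) * (x - l5)
      = (x - l1) * (x - l2) * (x - l5) * ((x - r3) * (x - r4)) from by ring, h34,
    hl1, hl2, hl5]
  field_simp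
  ring
end
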